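/- arXiv:1407.6436 — 6 statements merged into one kernel-verified Lean document; each statement's English description precedes it below -/
import Mathlib

section
/- Let X = X₁ × ... × X_m (m > 1) be a direct product of finite groups whose factors are permuted transitively by a group G of automorphisms of X, and let V be a G-invariant subgroup of X. Then |V : [G,V]| ≤ |X|^{1/2}. -/
/-- The `i`-th direct factor of a direct product of groups, as a subgroup. -/
def factorSubgroup {ι : Type*} [DecidableEq ι] (X : ι → Type*) [∀ i, Group (X i)] (i : ι) :
    Subgroup (∀ j, X j) :=
  (MonoidHom.mulSingle X i).range


open MulAction in
lemma exists_fpf {M : Type*} [Group M] [Finite M] {ι : Type*} [Finite ι]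
    [MulAction M ι] (ht : MulAction.IsPretransitive M ι) (h1 : 1 < Nat.card ι) :
    ∃ m : M, ∀ i : ι, m • i ≠ i := by
  classical
  by_contra hcon
  push_neg at hcon
  have hne : Nonempty ι := Nat.card_pos_iff.mp (by omega) |>.1
  haveI : Fintype ι := Fintype.ofFinite ι
  haveI : Fintype M := Fintype.ofFinite M
  haveI : ∀ m : M, Fintype (fixedBy ι m) := fun m => Fintype.ofFinite _
  haveI : Fintype (orbitRel.Quotient M ι) := Fintype.ofFinite _
  have hb := MulAction.sum_card_fixedBy_eq_card_orbits_mul_card_group M ι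
  have hsub : Subsingleton (orbitRel.Quotient M ι) :=
    (MulAction.pretransitive_iff_subsingleton_quotient M ι).mp ht
  have hΩ : Fintype.card (orbitRel.Quotient M ι) = 1 := by
    have hne' : Nonempty (orbitRel.Quotient M ι) := by
      obtain ⟨i⟩ := hne; exact ⟨Quotient.mk _ i⟩
    have := Fintype.card_le_one_iff_subsingleton.mpr hsub
    have := Fintype.card_pos_iff.mpr hne'
    omega
  rw [hΩ, one_mul] at hb
  have h1' : ∀ m : M, 1 ≤ Fintype.card (fixedBy ι m) := by
    intro m
    obtain ⟨i, hi⟩ := hcon m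
    exact Fintype.card_pos_iff.mpr ⟨⟨i, hi⟩⟩
  have hone : 1 < Fintype.card (fixedBy ι (1 : M)) := by
    have : Fintype.card (fixedBy ι (1 : M)) = Fintype.card ι := by
      apply Fintype.card_of_finset'
      intro i; simp [MulAction.fixedBy]
    rw [this, ← Nat.card_eq_fintype_card]; exact h1
  have hlt : ∑ m : M, 1 < ∑ m : M, Fintype.card (fixedBy ι m) :=
    Finset.sum_lt_sum (fun m _ => h1' m) ⟨1, Finset.mem_univ _, hone⟩
  simp only [Finset.sum_const, Finset.card_univ, smul_eq_mul, mul_one] at hlt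
  omega



lemma card_fixed_sq_le {ι : Type*} [Finite ι] (X : ι → Type*) [∀ i, Group (X i)]
    [∀ i, Finite (X i)] (σ : Equiv.Perm ι) (hfix : ∀ i, σ i ≠ i)
    (hq : ∀ i j, Nat.card (X i) = Nat.card (X j))
    (f : ∀ i, X i → X (σ i))
    (C : Set (∀ i, X i)) (hC : ∀ x ∈ C, ∀ i, x (σ i) = f i (x i)) :
    Nat.card C ^ 2 ≤ Nat.card (∀ i, X i) := by
  classical
  rcases isEmpty_or_nonempty ι with he | hne
  · have h1 : Nat.card (∀ i, X i) = 1 := by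
      haveI : Unique (∀ i, X i) := ⟨⟨fun i => (he.elim i)⟩, fun x => funext fun i => he.elim i⟩
      exact Nat.card_unique
    have : Nat.card C ≤ Nat.card (∀ i, X i) := Nat.card_le_card_of_injective _ Subtype.val_injective
    rw [h1] at this ⊢
    nlinarith
  haveI : Fintype ι := Fintype.ofFinite ι
  obtain ⟨i₀⟩ := hne
  set c := Nat.card (X i₀) with hc
  -- setoid of cycles of σ
  let s : Setoid ι := ⟨σ.SameCycle, ⟨fun x => Equiv.Perm.SameCycle.rfl,
    Equiv.Perm.SameCycle.symm, Equiv.Perm.SameCycle.trans⟩⟩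
  let Q := Quotient s
  haveI : Fintype Q := Fintype.ofFinite _
  let rep : Q → ι := Quotient.out
  -- propagation along powers
  have prop : ∀ x ∈ C, ∀ y ∈ C, ∀ i, x i = y i → ∀ k : ℕ, x ((σ ^ k) i) = y ((σ ^ k) i) := by
    intro x hx y hy i hxy k
    induction k with
    | zero => exact hxy
    | succ k ih =>
      have h1 : (σ ^ (k + 1)) i = σ ((σ ^ k) i) := by
        rw [pow_succ']; rfl
      rw [h1, hC x hx ((σ ^ k) i), hC y hy ((σ ^ k) i), ih]
  -- injection C → ∀ q, X (rep q)
  have hinj : Function.Injective (fun (x : C) (q : Q) => (x : ∀ i, X i) (rep q)) := by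
    intro x y hxy
    ext j
    have hsc : σ.SameCycle (rep (Quotient.mk s j)) j := Quotient.mk_out j
    obtain ⟨k, -, hk⟩ := Equiv.Perm.SameCycle.exists_pow_eq' hsc
    have := prop x x.2 y y.2 (rep (Quotient.mk s j)) (congrFun hxy _) k
    rwa [hk] at this
  have h1 : Nat.card C ≤ c ^ Fintype.card Q := by
    calc Nat.card C ≤ Nat.card (∀ q : Q, X (rep q)) := Nat.card_le_card_of_injective _ hinj
    _ = ∏ q : Q, Nat.card (X (rep q)) := Nat.card_pi
    _ = c ^ Fintype.card Q := by
        rw [Finset.prod_congr rfl (fun q _ => hq (rep q) i₀), Finset.prod_const,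
          Finset.card_univ]
  -- 2 * card Q ≤ card ι
  have repinj : Function.Injective rep := Quotient.out_injective
  have h2 : 2 * Fintype.card Q ≤ Fintype.card ι := by
    have : Function.Injective (fun p : Q × Bool => if p.2 then σ (rep p.1) else rep p.1) := by
      rintro ⟨q, b⟩ ⟨q', b'⟩ h
      simp only at h
      have key : ∀ q q' : Q, rep q = σ (rep q') → False := by
        intro q q' hqq
        have hsc : σ.SameCycle (rep q') (rep q) := hqq ▸ ⟨1, by rw [zpow_one]⟩
        have : q' = q := by
          have := Quotient.sound (s := s) hsc
          rwa [Quotient.out_eq, Quotient.out_eq] at this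
        subst this
        exact hfix (rep q') hqq.symm
      cases b <;> cases b' <;> simp only [if_pos rfl, Bool.false_eq_true, if_neg] at h
      · rw [repinj h]
      · exact absurd h (fun h => key _ _ h)
      · exact absurd h.symm (fun h => key _ _ h)
      · rw [repinj (σ.injective h)]
    have := Fintype.card_le_of_injective _ this
    simpa [Fintype.card_prod, mul_comm] using this
  have hc1 : 1 ≤ c := Nat.card_pos
  calc Nat.card C ^ 2 ≤ (c ^ Fintype.card Q) ^ 2 := Nat.pow_le_pow_left h1 2
  _ = c ^ (2 * Fintype.card Q) := by rw [← pow_mul, mul_comm]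
  _ ≤ c ^ Fintype.card ι := Nat.pow_le_pow_right hc1 h2
  _ = Nat.card (∀ i, X i) := by
      rw [Nat.card_pi, Finset.prod_congr rfl (fun i _ => hq i i₀), Finset.prod_const,
        Finset.card_univ]

theorem relindex_commutator_sq_le_card
    {ι : Type*} [Finite ι] [DecidableEq ι] (X : ι → Type*)
    [∀ i, Group (X i)] [∀ i, Finite (X i)] (hm : 1 < Nat.card ι)
    {G : Type*} [Group G] (φ : G →* MulAut (∀ i, X i)) (ρ : G →* Equiv.Perm ι)
    (hperm : ∀ (g : G) (i : ι),
      Subgroup.map (φ g).toMonoidHom (factorSubgroup X i) = factorSubgroup X (ρ g i))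
    (htrans : ∀ i j : ι, ∃ g : G, ρ g i = j)
    (V : Subgroup (∀ i, X i))
    (hV : ∀ g : G, Subgroup.map (φ g).toMonoidHom V = V) :
    ((Subgroup.closure {x : ∀ i, X i | ∃ (g : G) (v : ∀ i, X i), v ∈ V ∧ x = v⁻¹ * φ g v}).relIndex V) ^ 2
      ≤ Nat.card (∀ i, X i) := by
  classical
  haveI : Fintype ι := Fintype.ofFinite ι
  -- all factors have the same cardinality
  have hfac : ∀ i : ι, Nat.card (factorSubgroup X i) = Nat.card (X i) := by
    intro i
    have hinj : Function.Injective (MonoidHom.mulSingle X i) := Pi.mulSingle_injective (M := X) i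
    exact (Nat.card_congr (Equiv.ofInjective _ hinj)).symm
  have hq : ∀ i j : ι, Nat.card (X i) = Nat.card (X j) := by
    intro i j
    obtain ⟨g, hg⟩ := htrans i j
    have hinj : Function.Injective (φ g).toMonoidHom := (φ g).injective
    have := Nat.card_congr (Subgroup.equivMapOfInjective (factorSubgroup X i) _ hinj).toEquiv
    rw [hperm g i, hg, hfac i, hfac j] at this
    exact this
  -- fixed-point-free element
  obtain ⟨g, hg⟩ : ∃ g : G, ∀ i : ι, ρ g i ≠ i := by
    haveI ht : MulAction.IsPretransitive ρ.range ι := by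
      constructor
      intro i j
      obtain ⟨g, hg⟩ := htrans i j
      exact ⟨⟨ρ g, g, rfl⟩, hg⟩
    obtain ⟨⟨m, g, rfl⟩, hmfix⟩ := exists_fpf ht hm
    exact ⟨g, fun i h => hmfix i (by simpa [Subgroup.smul_def] using h)⟩
  set σ := ρ g with hσ
  -- the "twisting" maps on components
  set f : ∀ i, X i → X (σ i) := fun i a => (φ g (Pi.mulSingle i a)) (σ i) with hf
  have hcomp : ∀ (x : ∀ i, X i) (i : ι), (φ g x) (σ i) = f i (x i) := by
    intro x i
    have key : ∀ (j : ι) (a : X j), (φ g (Pi.mulSingle j a)) (σ i)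
        = (φ g (Pi.mulSingle i (Pi.mulSingle j a i))) (σ i) := by
      intro j a
      by_cases hji : j = i
      · subst hji; rw [Pi.mulSingle_eq_same]
      · rw [Pi.mulSingle_eq_of_ne (fun h : i = j => hji h.symm), Pi.mulSingle_one, map_one]
        have hmem : φ g (Pi.mulSingle j a) ∈ factorSubgroup X (σ j) := by
          rw [← hperm g j]
          exact ⟨Pi.mulSingle j a, ⟨a, rfl⟩, rfl⟩
        obtain ⟨b, hb⟩ := hmem
        have hne : σ i ≠ σ j := fun h => hji (σ.injective h).symm
        rw [← hb, MonoidHom.mulSingle_apply, Pi.mulSingle_eq_of_ne hne b, Pi.one_apply]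
    have hhom : (Pi.evalMonoidHom X (σ i)).comp (φ g).toMonoidHom
        = ((Pi.evalMonoidHom X (σ i)).comp ((φ g).toMonoidHom.comp
            (MonoidHom.mulSingle X i))).comp (Pi.evalMonoidHom X i) := by
      apply MonoidHom.pi_ext
      intro j a
      simp only [MonoidHom.comp_apply, Pi.evalMonoidHom_apply, MonoidHom.mulSingle_apply,
        MulEquiv.coe_toMonoidHom]
      exact key j a
    exact DFunLike.congr_fun hhom x
  -- the fixed-point set
  set C : Set (∀ i, X i) := {x | φ g x = x} with hCdef
  have hCsq : Nat.card C ^ 2 ≤ Nat.card (∀ i, X i) := by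
    refine card_fixed_sq_le X σ hg hq f C (fun x hx i => ?_)
    have := hcomp x i
    rwa [hx] at this
  -- the index argument
  set S : Set (∀ i, X i) :=
    {x : ∀ i, X i | ∃ (g : G) (v : ∀ i, X i), v ∈ V ∧ x = v⁻¹ * φ g v} with hS
  set W := Subgroup.closure S with hW
  set K := W ⊓ V with hK
  set θ : V → (∀ i, X i) := fun v => (v : ∀ i, X i)⁻¹ * φ g v with hθ
  have hθV : ∀ v : V, θ v ∈ V := by
    intro v
    have h1 : φ g (v : ∀ i, X i) ∈ Subgroup.map (φ g).toMonoidHom V := ⟨v, v.2, rfl⟩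
    rw [hV g] at h1
    exact mul_mem (inv_mem v.2) h1
  have hθW : ∀ v : V, θ v ∈ W := fun v => Subgroup.subset_closure ⟨g, v, v.2, rfl⟩
  set T : Set (∀ i, X i) := Set.range θ with hT
  have hsec : ∀ t : T, ∃ v : V, θ v = t := fun t => t.2
  choose sec hsecspec using hsec
  -- injection V → C × T
  have key : ∀ v w : V, θ v = θ w → ((v : ∀ i, X i) * (w : ∀ i, X i)⁻¹) ∈ C := by
    intro v w h
    have h' : (w : ∀ i, X i)⁻¹ * φ g w = (v : ∀ i, X i)⁻¹ * φ g v := by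
      simpa [hθ] using h.symm
    show φ g ((v : ∀ i, X i) * (w : ∀ i, X i)⁻¹) = (v : ∀ i, X i) * (w : ∀ i, X i)⁻¹
    rw [map_mul, map_inv]
    calc (φ g) (v : ∀ i, X i) * ((φ g) (w : ∀ i, X i))⁻¹
        = (v : ∀ i, X i) * ((v : ∀ i, X i)⁻¹ * (φ g) (v : ∀ i, X i))
          * ((φ g) (w : ∀ i, X i))⁻¹ := by group
      _ = (v : ∀ i, X i) * ((w : ∀ i, X i)⁻¹ * (φ g) (w : ∀ i, X i))
          * ((φ g) (w : ∀ i, X i))⁻¹ := by rw [h']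
      _ = (v : ∀ i, X i) * (w : ∀ i, X i)⁻¹ := by group
  have hcardV : Nat.card V ≤ Nat.card C * Nat.card T := by
    let F : V → C × T := fun v =>
      (⟨(v : ∀ i, X i) * ((sec ⟨θ v, ⟨v, rfl⟩⟩ : V) : ∀ i, X i)⁻¹,
        key v _ (hsecspec ⟨θ v, ⟨v, rfl⟩⟩).symm⟩, ⟨θ v, ⟨v, rfl⟩⟩)
    have hFinj : Function.Injective F := by
      intro v v' h
      have h2 : (F v).2 = (F v').2 := congrArg Prod.snd h
      have h4 : sec (F v).2 = sec (F v').2 := congrArg sec h2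
      have h1 : ((F v).1 : ∀ i, X i) = ((F v').1 : ∀ i, X i) :=
        congrArg (fun p : C × T => (p.1 : ∀ i, X i)) h
      have h5 : (v : ∀ i, X i) * ((sec (F v).2 : V) : ∀ i, X i)⁻¹
          = (v' : ∀ i, X i) * ((sec (F v').2 : V) : ∀ i, X i)⁻¹ := h1
      rw [h4] at h5
      exact Subtype.ext (mul_right_cancel h5)
    have := Nat.card_le_card_of_injective F hFinj
    rwa [Nat.card_prod] at this
  have hTK : Nat.card T ≤ Nat.card K := by
    have hsub : T ⊆ (K : Set (∀ i, X i)) := by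
      rintro x ⟨v, rfl⟩
      exact ⟨hθW v, hθV v⟩
    exact Nat.card_mono (Set.toFinite _) hsub
  -- relate relindex and card K
  have hKcard : Nat.card (W.subgroupOf V) = Nat.card K := by
    rw [← Subgroup.inf_subgroupOf_right W V]
    exact Nat.card_congr (Subgroup.subgroupOfEquivOfLe inf_le_right).toEquiv
  have hmul : W.relIndex V * Nat.card K = Nat.card V := by
    rw [← hKcard]
    exact Subgroup.index_mul_card (W.subgroupOf V)
  have hKpos : 0 < Nat.card K := Nat.card_pos
  have hrel : W.relIndex V ≤ Nat.card C := by
    have h1 : W.relIndex V * Nat.card K ≤ Nat.card C * Nat.card K := by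
      rw [hmul]
      calc Nat.card V ≤ Nat.card C * Nat.card T := hcardV
        _ ≤ Nat.card C * Nat.card K := Nat.mul_le_mul_left _ hTK
    exact Nat.le_of_mul_le_mul_right h1 hKpos
  calc (W.relIndex V) ^ 2 ≤ Nat.card C ^ 2 := Nat.pow_le_pow_left hrel 2
    _ ≤ Nat.card (∀ i, X i) := hCsq
end

section
/- Let G be a finite group with a normal series G = G₀ ≥ G₁ ≥ ... ≥ G_n = 1 where each G_i is normal in G. Then |G : G'| divides, and in particular is at most, the product over i of |H_i : H_i'|, where H_i = G_i/G_{i+1}. -/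
lemma chain_relindex_aux {G : Type*} [Group G] :
    ∀ (n : ℕ) (D : Fin (n + 1) → Subgroup G), (∀ i : Fin n, D i.succ ≤ D i.castSucc) →
      (D (Fin.last n)).relIndex (D 0) = ∏ i : Fin n, (D i.succ).relIndex (D i.castSucc)
  | 0, D, _ => by simp
  | (n + 1), D, hle => by
    have hanti : Antitone D := Fin.antitone_iff_succ_le.mpr hle
    have IH := chain_relindex_aux n (fun i => D i.succ) (fun i => by
      simpa only [Fin.succ_castSucc] using hle i.succ)
    simp only [Fin.succ_last, Fin.succ_castSucc, Fin.succ_zero_eq_one] at IH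
    rw [Fin.prod_univ_succ, ← IH, Fin.succ_zero_eq_one, Fin.castSucc_zero, mul_comm,
      Subgroup.relIndex_mul_relIndex _ _ _ (hanti (Fin.le_last 1)) (hanti (Fin.zero_le 1))]

theorem commutator_index_dvd_prod_of_normal_series
    {G : Type*} [Group G] [Finite G] (n : ℕ) (c : Fin (n + 1) → Subgroup G)
    (h0 : c 0 = ⊤) (hn : c (Fin.last n) = ⊥)
    (hnorm : ∀ i, (c i).Normal)
    (hle : ∀ i : Fin n, c i.succ ≤ c i.castSucc) :
    ((commutator G).index ∣
        ∏ i : Fin n, (⁅c i.castSucc, c i.castSucc⁆ ⊔ c i.succ).relIndex (c i.castSucc)) ∧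
      (commutator G).index ≤
        ∏ i : Fin n, (⁅c i.castSucc, c i.castSucc⁆ ⊔ c i.succ).relIndex (c i.castSucc) := by
  set D : Fin (n + 1) → Subgroup G := fun i => commutator G ⊔ c i with hD
  have hDle : ∀ i : Fin n, D i.succ ≤ D i.castSucc := fun i =>
    sup_le_sup_left (hle i) _
  have key : (commutator G).index = ∏ i : Fin n, (D i.succ).relIndex (D i.castSucc) := by
    rw [← chain_relindex_aux n D hDle]
    simp [hD, h0, hn, Subgroup.relIndex_top_right]
  have hterm : ∀ i : Fin n, (D i.succ).relIndex (D i.castSucc) ∣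
      (⁅c i.castSucc, c i.castSucc⁆ ⊔ c i.succ).relIndex (c i.castSucc) := by
    intro i
    haveI := hnorm i.succ
    haveI : (D i.succ).Normal := Subgroup.sup_normal _ _
    have hsup : D i.castSucc = D i.succ ⊔ c i.castSucc := by
      rw [hD]
      simp only [sup_assoc]
      rw [sup_eq_right.mpr (hle i)]
    rw [hsup, Subgroup.relIndex_sup_left]
    refine Subgroup.relIndex_dvd_of_le_left _ (sup_le ?_ le_sup_right)
    refine le_trans ?_ le_sup_left
    exact (Subgroup.commutator_mono le_top le_top).trans_eq (commutator_def G).symm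
  have hdvd : (commutator G).index ∣
      ∏ i : Fin n, (⁅c i.castSucc, c i.castSucc⁆ ⊔ c i.succ).relIndex (c i.castSucc) := by
    rw [key]
    exact Finset.prod_dvd_prod_of_dvd _ _ fun i _ => hterm i
  refine ⟨hdvd, Nat.le_of_dvd ?_ hdvd⟩
  refine Nat.pos_of_ne_zero (Finset.prod_ne_zero_iff.mpr fun i _ => ?_)
  exact Subgroup.index_ne_zero_of_finite
end

section
/- Let T = A ∘_Z F be a central product of finite groups A and F over a common central subgroup Z ≤ Z(A) ∩ Z(F), with A/Z abelian. Let Z₁ = A', Z₂ = F' ∩ Z, Z₀ = Z₁ ∩ Z₂. Then T' = Z₁ ∘_{Z₀} F' and |T : T'| = |A/Z| · |F : F'| / |Z₁ : Z₀|. -/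
open Subgroup Pointwise
open scoped commutatorElement

private lemma comm_aux {G : Type*} [Group G] {a b f g : G}
    (haf : Commute a f) (hag : Commute a g) (hbf : Commute b f) (hbg : Commute b g) :
    ⁅a * f, b * g⁆ = ⁅a, b⁆ * ⁅f, g⁆ := by
  have h1 : Commute ((b * a)⁻¹) (f * g * (g * f)⁻¹) :=
    (((hbf.mul_right hbg).mul_left ((haf.mul_right hag))).mul_right
      (((hbg.mul_right hbf).mul_left (hag.mul_right haf)).inv_right)).inv_left
  calc ⁅a * f, b * g⁆ = (a * f) * (b * g) * ((b * g) * (a * f))⁻¹ := by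
        rw [commutatorElement_def]; group
    _ = a * b * (f * g) * (b * a * (g * f))⁻¹ := by
        rw [hbf.symm.mul_mul_mul_comm, hag.symm.mul_mul_mul_comm]
    _ = a * b * ((f * g * (g * f)⁻¹) * (b * a)⁻¹) := by group
    _ = a * b * ((b * a)⁻¹ * (f * g * (g * f)⁻¹)) := by rw [← h1.eq]
    _ = ⁅a, b⁆ * ⁅f, g⁆ := by rw [commutatorElement_def, commutatorElement_def]; group

private lemma card_mul_relindex_aux {G : Type*} [Group G] {H K : Subgroup G} (h : H ≤ K) :
    Nat.card H * H.relIndex K = Nat.card K := by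
  rw [relIndex, ← Nat.card_congr (subgroupOfEquivOfLe h).toEquiv]
  exact Subgroup.card_mul_index _

private lemma prod_card_aux {G : Type*} [Group G] (H K : Subgroup G) [K.Normal] :
    Nat.card (H ⊔ K : Subgroup G) * Nat.card (H ⊓ K : Subgroup G)
      = Nat.card H * Nat.card K := by
  have h1 : Nat.card K * K.relIndex (H ⊔ K) = Nat.card (H ⊔ K : Subgroup G) :=
    card_mul_relindex_aux le_sup_right
  have h2 : Nat.card (H ⊓ K : Subgroup G) * (H ⊓ K).relIndex H = Nat.card H :=
    card_mul_relindex_aux inf_le_left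
  have h3 : K.relIndex (H ⊔ K) = (H ⊓ K).relIndex H := by
    rw [relIndex_sup_right, ← inf_relIndex_right K H, inf_comm]
  rw [← h1, ← h2, h3]; ring

theorem central_product_commutator_and_index
    {T : Type*} [Group T] [Finite T] (A F Z : Subgroup T)
    (hZA : Z ≤ A) (hZF : Z ≤ F)
    (hZcA : Z ≤ Subgroup.centralizer (A : Set T))
    (hZcF : Z ≤ Subgroup.centralizer (F : Set T))
    (hcomm : ∀ a ∈ A, ∀ f ∈ F, Commute a f)
    (hAF : A ⊔ F = ⊤) (hint : A ⊓ F = Z)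
    (habel : ⁅A, A⁆ ≤ Z) :
    commutator T = ⁅A, A⁆ ⊔ ⁅F, F⁆ ∧
      ⁅A, A⁆ ⊓ ⁅F, F⁆ = ⁅A, A⁆ ⊓ (⁅F, F⁆ ⊓ Z) ∧
      (commutator T).index * ((⁅A, A⁆ ⊓ (⁅F, F⁆ ⊓ Z)).relIndex ⁅A, A⁆)
        = Z.relIndex A * (⁅F, F⁆).relIndex F := by
  -- conjugation by the other factor fixes elements
  have hfixA : ∀ f ∈ F, ∀ x ∈ A, f * x * f⁻¹ = x := by
    intro f hf x hx
    calc f * x * f⁻¹ = x * f * f⁻¹ := by rw [← (hcomm x hx f hf).eq]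
      _ = x := mul_inv_cancel_right _ _
  have hfixF : ∀ a ∈ A, ∀ x ∈ F, a * x * a⁻¹ = x := by
    intro a ha x hx
    calc a * x * a⁻¹ = x * a * a⁻¹ := by rw [(hcomm a ha x hx).eq]
      _ = x := mul_inv_cancel_right _ _
  have hAn : A.Normal := by
    rw [← normalizer_eq_top_iff, eq_top_iff, ← hAF]
    refine sup_le le_normalizer fun f hf => mem_normalizer_iff.mpr fun h => ?_
    constructor
    · intro hh; rw [hfixA f hf h hh]; exact hh
    · intro hh
      have h2 : f⁻¹ * (f * h * f⁻¹) * f⁻¹⁻¹ = f * h * f⁻¹ :=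
        hfixA f⁻¹ (inv_mem hf) _ hh
      have h3 : f⁻¹ * (f * h * f⁻¹) * f⁻¹⁻¹ = h := by group
      rw [h3] at h2; rw [h2]; exact hh
  have hFn : F.Normal := by
    rw [← normalizer_eq_top_iff, eq_top_iff, ← hAF]
    refine sup_le (fun a ha => mem_normalizer_iff.mpr fun h => ?_) le_normalizer
    constructor
    · intro hh; rw [hfixF a ha h hh]; exact hh
    · intro hh
      have h2 : a⁻¹ * (a * h * a⁻¹) * a⁻¹⁻¹ = a * h * a⁻¹ :=
        hfixF a⁻¹ (inv_mem ha) _ hh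
      have h3 : a⁻¹ * (a * h * a⁻¹) * a⁻¹⁻¹ = h := by group
      rw [h3] at h2; rw [h2]; exact hh
  -- Part 1
  have h1 : commutator T = ⁅A, A⁆ ⊔ ⁅F, F⁆ := by
    apply le_antisymm
    · rw [_root_.commutator_def, ← hAF]
      refine (commutator_le).mpr fun x hx y hy => ?_
      have hx' : x ∈ ((A : Set T) * (F : Set T)) := by
        rw [← Subgroup.mul_normal A F]; exact hx
      have hy' : y ∈ ((A : Set T) * (F : Set T)) := by
        rw [← Subgroup.mul_normal A F]; exact hy
      obtain ⟨a, ha, f, hf, rfl⟩ := hx'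
      obtain ⟨b, hb, g, hg, rfl⟩ := hy'
      rw [comm_aux (hcomm a ha f hf) (hcomm a ha g hg) (hcomm b hb f hf) (hcomm b hb g hg)]
      exact mul_mem (mem_sup_left (commutator_mem_commutator ha hb))
        (mem_sup_right (commutator_mem_commutator hf hg))
    · exact sup_le (commutator_mono le_top le_top) (commutator_mono le_top le_top)
  -- Part 2
  have h2 : ⁅A, A⁆ ⊓ ⁅F, F⁆ = ⁅A, A⁆ ⊓ (⁅F, F⁆ ⊓ Z) := by
    rw [← inf_assoc]
    exact (inf_eq_left.mpr (le_trans inf_le_left habel)).symm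
  refine ⟨h1, h2, ?_⟩
  rw [← h2]
  -- Part 3: index arithmetic
  have hA'A : ⁅A, A⁆ ≤ A := (commutator_le).mpr fun p hp q hq => by
    rw [commutatorElement_def]
    exact mul_mem (mul_mem (mul_mem hp hq) (inv_mem hp)) (inv_mem hq)
  have hF'F : ⁅F, F⁆ ≤ F := (commutator_le).mpr fun p hp q hq => by
    rw [commutatorElement_def]
    exact mul_mem (mul_mem (mul_mem hp hq) (inv_mem hp)) (inv_mem hq)
  have e1 : Nat.card (commutator T) * (commutator T).index = Nat.card T :=
    Subgroup.card_mul_index _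
  have e2 : Nat.card (⁅A, A⁆ ⊓ ⁅F, F⁆ : Subgroup T) * (⁅A, A⁆ ⊓ ⁅F, F⁆).relIndex ⁅A, A⁆
      = Nat.card (⁅A, A⁆ : Subgroup T) := card_mul_relindex_aux inf_le_left
  have e3 : Nat.card Z * Z.relIndex A = Nat.card A := card_mul_relindex_aux hZA
  have e4 : Nat.card (⁅F, F⁆ : Subgroup T) * (⁅F, F⁆).relIndex F = Nat.card F := card_mul_relindex_aux hF'F
  have e5 : Nat.card T * Nat.card Z = Nat.card A * Nat.card F := by
    have := prod_card_aux A F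
    rwa [hAF, hint, Subgroup.card_top] at this
  have hF'n : (⁅F, F⁆).Normal := Subgroup.commutator_normal F F
  have e6 : Nat.card (commutator T) * Nat.card (⁅A, A⁆ ⊓ ⁅F, F⁆ : Subgroup T)
      = Nat.card (⁅A, A⁆ : Subgroup T) * Nat.card (⁅F, F⁆ : Subgroup T) := by
    have := prod_card_aux ⁅A, A⁆ ⁅F, F⁆
    rwa [← h1] at this
  have hpos : 0 < Nat.card (commutator T) * (Nat.card (⁅A, A⁆ ⊓ ⁅F, F⁆ : Subgroup T)
      * (Nat.card Z * Nat.card (⁅F, F⁆ : Subgroup T))) := by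
    have p1 : 0 < Nat.card (commutator T) := Nat.card_pos
    have p2 : 0 < Nat.card (⁅A, A⁆ ⊓ ⁅F, F⁆ : Subgroup T) := Nat.card_pos
    have p3 : 0 < Nat.card Z := Nat.card_pos
    have p4 : 0 < Nat.card (⁅F, F⁆ : Subgroup T) := Nat.card_pos
    positivity
  apply Nat.eq_of_mul_eq_mul_left hpos
  calc Nat.card (commutator T) * (Nat.card (⁅A, A⁆ ⊓ ⁅F, F⁆ : Subgroup T)
        * (Nat.card Z * Nat.card (⁅F, F⁆ : Subgroup T)))
        * ((commutator T).index * (⁅A, A⁆ ⊓ ⁅F, F⁆).relIndex ⁅A, A⁆)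
      = (Nat.card (commutator T) * (commutator T).index)
        * ((Nat.card (⁅A, A⁆ ⊓ ⁅F, F⁆ : Subgroup T)
          * (⁅A, A⁆ ⊓ ⁅F, F⁆).relIndex ⁅A, A⁆) * (Nat.card Z * Nat.card (⁅F, F⁆ : Subgroup T))) := by ring
    _ = Nat.card T * (Nat.card (⁅A, A⁆ : Subgroup T) * (Nat.card Z * Nat.card (⁅F, F⁆ : Subgroup T))) := by rw [e1, e2]
    _ = (Nat.card T * Nat.card Z) * (Nat.card (⁅A, A⁆ : Subgroup T) * Nat.card (⁅F, F⁆ : Subgroup T)) := by ring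
    _ = (Nat.card A * Nat.card F)
        * (Nat.card (commutator T) * Nat.card (⁅A, A⁆ ⊓ ⁅F, F⁆ : Subgroup T)) := by
        rw [e5, e6]
    _ = ((Nat.card Z * Z.relIndex A) * (Nat.card (⁅F, F⁆ : Subgroup T) * (⁅F, F⁆).relIndex F))
        * (Nat.card (commutator T) * Nat.card (⁅A, A⁆ ⊓ ⁅F, F⁆ : Subgroup T)) := by
        rw [e3, e4]
    _ = Nat.card (commutator T) * (Nat.card (⁅A, A⁆ ⊓ ⁅F, F⁆ : Subgroup T)
        * (Nat.card Z * Nat.card (⁅F, F⁆ : Subgroup T))) * (Z.relIndex A * (⁅F, F⁆).relIndex F) := by ring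
end

section
/- Let G be a finite group acting faithfully and transitively by conjugation on the m direct factors of N = L₁ × ... × L_m (nonabelian simple, m ≥ 1), with K = ∩_i N_G(L_i). Then |G : G'K| ≤ 2^{m-1}. -/
universe u v

open scoped commutatorElement

private lemma normal_of_commutator_le' {G : Type u} [Group G] {T : Subgroup G}
    (h : commutator G ≤ T) : T.Normal := by
  constructor
  intro n hn g
  have h1 : ⁅g, n⁆ ∈ commutator G :=
    Subgroup.commutator_mem_commutator (Subgroup.mem_top g) (Subgroup.mem_top n)
  have h2 : g * n * g⁻¹ = ⁅g, n⁆ * n := by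
    rw [commutatorElement_def]; group
  rw [h2]
  exact mul_mem (h h1) hn

-- sub-lemma: commutator ⊔ kernel of subgroup S lands in T.subgroupOf S
private lemma csub' {G : Type u} [Group G] {Ω : Type v} [MulAction G Ω]
    (S T : Subgroup G) (hc : commutator G ≤ T)
    (hk : (⨅ ω : Ω, MulAction.stabilizer G ω) ≤ T) :
    (commutator ↥S ⊔ ⨅ ω : Ω, MulAction.stabilizer ↥S ω) ≤ T.subgroupOf S := by
  apply sup_le
  · rw [Subgroup.subgroupOf, ← Subgroup.map_le_iff_le_comap]
    calc Subgroup.map S.subtype (commutator ↥S)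
        = ⁅Subgroup.map S.subtype ⊤, Subgroup.map S.subtype ⊤⁆ := by
          rw [commutator_def, Subgroup.map_commutator]
      _ ≤ commutator G := by
          rw [← MonoidHom.range_eq_map, Subgroup.range_subtype, commutator_def]
          exact Subgroup.commutator_mono le_top le_top
      _ ≤ T := hc
  · intro s hs
    rw [Subgroup.mem_subgroupOf]
    apply hk
    rw [Subgroup.mem_iInf] at hs ⊢
    intro ω
    have := hs ω
    rw [MulAction.mem_stabilizer_iff] at this ⊢
    exact this

private lemma orbit_card_le' {G : Type u} [Group G] {Ω : Type v} [Finite Ω] [MulAction G Ω]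
    (S : Subgroup G) :
    Nat.card (Quotient (MulAction.orbitRel G Ω)) ≤
      Nat.card (Quotient (MulAction.orbitRel ↥S Ω)) := by
  have hmap : ∀ (x y : Ω), (MulAction.orbitRel ↥S Ω) x y →
      Quotient.mk (MulAction.orbitRel G Ω) x = Quotient.mk (MulAction.orbitRel G Ω) y := by
    intro x y h
    rw [MulAction.orbitRel_apply, MulAction.mem_orbit_iff] at h
    obtain ⟨s, hs⟩ := h
    exact Quotient.sound (MulAction.mem_orbit_iff.mpr ⟨(s : G), hs⟩)
  refine Nat.card_le_card_of_surjective
    (Quotient.lift (fun x => Quotient.mk (MulAction.orbitRel G Ω) x) hmap) ?_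
  intro q
  obtain ⟨x, rfl⟩ := q.exists_rep
  exact ⟨Quotient.mk _ x, rfl⟩

private lemma orbit_split' {G : Type u} [Group G] [Finite G] {Ω : Type v} [Finite Ω]
    [MulAction G Ω] (M : Subgroup G) (hnm : M.Normal) (ω : Ω)
    (hstab : MulAction.stabilizer G ω ≤ M) :
    Nat.card (Quotient (MulAction.orbitRel G Ω)) + M.index ≤
      Nat.card (Quotient (MulAction.orbitRel ↥M Ω)) + 1 := by
  classical
  have hGofM : ∀ (x y : Ω), Quotient.mk (MulAction.orbitRel ↥M Ω) x =
      Quotient.mk (MulAction.orbitRel ↥M Ω) y →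
      Quotient.mk (MulAction.orbitRel G Ω) x = Quotient.mk (MulAction.orbitRel G Ω) y := by
    intro x y h
    obtain ⟨s, hs⟩ := Quotient.exact h
    exact Quotient.sound (MulAction.mem_orbit_iff.mpr ⟨(s : G), hs⟩)
  have hsec : ∀ y : Quotient (MulAction.orbitRel G Ω), ∃ x : Ω,
      Quotient.mk (MulAction.orbitRel G Ω) x = y := fun y => y.exists_rep
  choose sec hsec using hsec
  have hrep : ∀ c : G ⧸ M, ∃ g : G, QuotientGroup.mk g = c := fun c => c.exists_rep
  choose rep hrep using hrep
  set y0 : Quotient (MulAction.orbitRel G Ω) := Quotient.mk _ ω with hy0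
  set Ψ : Quotient (MulAction.orbitRel G Ω) ⊕ (G ⧸ M) →
      Quotient (MulAction.orbitRel ↥M Ω) ⊕ PUnit.{1} := fun s =>
    match s with
    | Sum.inl y => if y = y0 then Sum.inr PUnit.unit else Sum.inl (Quotient.mk _ (sec y))
    | Sum.inr c => Sum.inl (Quotient.mk _ (rep c • ω)) with hΨ
  have horb : ∀ c : G ⧸ M, Quotient.mk (MulAction.orbitRel G Ω) (rep c • ω) = y0 := by
    intro c
    exact Quotient.sound (MulAction.mem_orbit_iff.mpr ⟨rep c, rfl⟩)
  have hcoset : ∀ c c' : G ⧸ M,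
      Quotient.mk (MulAction.orbitRel ↥M Ω) (rep c • ω) =
      Quotient.mk (MulAction.orbitRel ↥M Ω) (rep c' • ω) → c = c' := by
    intro c c' h
    obtain ⟨s, hs0⟩ := Quotient.exact h
    have hs : (s : G) • (rep c' • ω) = rep c • ω := hs0
    have hs' : ((rep c)⁻¹ * (s : G) * rep c') ∈ MulAction.stabilizer G ω := by
      rw [MulAction.mem_stabilizer_iff, mul_smul, mul_smul, hs]
      simp
    have h3 : ((rep c)⁻¹ * (s : G) * rep c) ∈ M := by
      simpa using hnm.conj_mem (s : G) s.2 (rep c)⁻¹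
    have h4 : ((rep c)⁻¹ * rep c') ∈ M := by
      have hmm := mul_mem (inv_mem h3) (hstab hs')
      have heq : ((rep c)⁻¹ * (s : G) * rep c)⁻¹ * ((rep c)⁻¹ * (s : G) * rep c') =
          (rep c)⁻¹ * rep c' := by group
      rwa [heq] at hmm
    rw [← hrep c, ← hrep c']
    exact (QuotientGroup.eq).mpr h4
  have hinj : Function.Injective Ψ := by
    rintro (y | c) (y' | c') h <;> simp only [hΨ] at h
    · by_cases h1 : y = y0
      · by_cases h2 : y' = y0
        · rw [h1, h2]
        · rw [if_pos h1, if_neg h2] at h; exact absurd h (by simp)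
      · by_cases h2 : y' = y0
        · rw [if_neg h1, if_pos h2] at h; exact absurd h (by simp)
        · rw [if_neg h1, if_neg h2, Sum.inl.injEq] at h
          have h5 := hGofM _ _ h
          rw [hsec, hsec] at h5
          rw [h5]
    · by_cases h1 : y = y0
      · rw [if_pos h1] at h; exact absurd h (by simp)
      · exfalso
        rw [if_neg h1, Sum.inl.injEq] at h
        apply h1
        have h5 := hGofM _ _ h
        rw [hsec] at h5
        rw [h5, horb c']
    · by_cases h1 : y' = y0
      · rw [if_pos h1] at h; exact absurd h (by simp)
      · exfalso
        rw [if_neg h1, Sum.inl.injEq] at h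
        apply h1
        have h5 := hGofM _ _ h.symm
        rw [hsec] at h5
        rw [h5, horb c]
    · rw [Sum.inl.injEq] at h
      rw [hcoset _ _ h]
  have hcard := Nat.card_le_card_of_injective Ψ hinj
  rw [Nat.card_sum, Nat.card_sum] at hcard
  have hpu : Nat.card PUnit.{1} = 1 := Nat.card_unique
  rw [Subgroup.index_eq_card]
  omega

private lemma AG_aux : ∀ (k : ℕ) (G : Type u) [Group G] [Finite G] (Ω : Type v) [Finite Ω]
    [MulAction G Ω], Nat.card G ≤ k →
    (commutator G ⊔ ⨅ ω : Ω, MulAction.stabilizer G ω).index ≤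
      2 ^ (Nat.card Ω - Nat.card (Quotient (MulAction.orbitRel G Ω))) := by
  intro k
  induction k with
  | zero =>
    intro G _ _ Ω _ _ hk
    have hpos := Nat.card_pos (α := G)
    exact absurd (hpos.trans_le hk) (lt_irrefl 0)
  | succ k ih =>
    intro G _ _ Ω _ _ hk
    classical
    set n := Nat.card Ω with hn
    set b := Nat.card (Quotient (MulAction.orbitRel G Ω)) with hb
    set K : Subgroup G := ⨅ ω : Ω, MulAction.stabilizer G ω with hK
    set J : Subgroup G := commutator G ⊔ K with hJ
    have hcJ : commutator G ≤ J := le_sup_left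
    have hKJ : K ≤ J := le_sup_right
    by_cases hJtop : J = ⊤
    · rw [hJtop, Subgroup.index_top]
      exact Nat.one_le_two_pow
    by_cases hard : ∀ ω : Ω, J ⊔ MulAction.stabilizer G ω = ⊤
    · -- hard case : recurse into a point stabilizer
      have hJn : J.Normal := normal_of_commutator_le' hcJ
      have hex : ∃ ω : Ω, MulAction.stabilizer G ω ≠ ⊤ := by
        by_contra hcon
        push_neg at hcon
        apply hJtop
        have hKtop : K = ⊤ := by rw [hK]; simp [hcon]
        rw [hJ, hKtop, sup_top_eq]
      obtain ⟨ω, hHne⟩ := hex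
      set H := MulAction.stabilizer G ω with hH
      have hsup : H ⊔ J = ⊤ := by rw [sup_comm]; exact hard ω
      have hrel : J.relIndex H = J.index := by
        have e := (QuotientGroup.quotientInfEquivProdNormalQuotient H J).toEquiv
        have h1 : J.relIndex H = J.relIndex (H ⊔ J) := by
          rw [Subgroup.relIndex, Subgroup.relIndex, Subgroup.index_eq_card,
            Subgroup.index_eq_card]
          exact Nat.card_congr e
        rw [h1, hsup, Subgroup.relIndex_top_right]
      have hHlt : Nat.card ↥H ≤ k := by
        have h2 := Subgroup.card_mul_index H
        have h3 : H.index ≠ 1 := fun hc => hHne (Subgroup.index_eq_one.mp hc)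
        have h4 : H.index ≠ 0 := Subgroup.index_ne_zero_of_finite
        have h5 : 0 < Nat.card ↥H := Nat.card_pos
        have h6 : Nat.card ↥H * 2 ≤ Nat.card ↥H * H.index :=
          Nat.mul_le_mul_left _ (by omega)
        rw [h2] at h6
        omega
      have hIH := ih ↥H Ω hHlt
      have hle2 : (J.subgroupOf H).index ≤
          (commutator ↥H ⊔ ⨅ ω' : Ω, MulAction.stabilizer ↥H ω').index := by
        apply Nat.le_of_dvd
        · exact Nat.pos_of_ne_zero Subgroup.index_ne_zero_of_finite
        · exact Subgroup.index_dvd_of_le (csub' H J hcJ hKJ)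
      have hble : b ≤ Nat.card (Quotient (MulAction.orbitRel ↥H Ω)) := orbit_card_le' H
      calc J.index = (J.subgroupOf H).index := hrel.symm
        _ ≤ (commutator ↥H ⊔ ⨅ ω' : Ω, MulAction.stabilizer ↥H ω').index := hle2
        _ ≤ 2 ^ (n - Nat.card (Quotient (MulAction.orbitRel ↥H Ω))) := hIH
        _ ≤ 2 ^ (n - b) := Nat.pow_le_pow_right (by norm_num)
            (Nat.sub_le_sub_left hble n)
    · -- splitting case
      push_neg at hard
      obtain ⟨ω, hMne⟩ := hard
      set M : Subgroup G := J ⊔ MulAction.stabilizer G ω with hM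
      have hJM : J ≤ M := le_sup_left
      have hcM : commutator G ≤ M := hcJ.trans hJM
      have hKM : K ≤ M := hKJ.trans hJM
      have hMn : M.Normal := normal_of_commutator_le' hcM
      have hstabM : MulAction.stabilizer G ω ≤ M := le_sup_right
      have hMidx2 : 2 ≤ M.index := by
        have h3 : M.index ≠ 1 := fun hc => hMne (Subgroup.index_eq_one.mp hc)
        have h4 : M.index ≠ 0 := Subgroup.index_ne_zero_of_finite
        omega
      have hMlt : Nat.card ↥M ≤ k := by
        have h2 := Subgroup.card_mul_index M
        have h5 : 0 < Nat.card ↥M := Nat.card_pos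
        have h6 : Nat.card ↥M * 2 ≤ Nat.card ↥M * M.index :=
          Nat.mul_le_mul_left _ hMidx2
        rw [h2] at h6
        omega
      have hIH := ih ↥M Ω hMlt
      have hle2 : (J.subgroupOf M).index ≤
          (commutator ↥M ⊔ ⨅ ω' : Ω, MulAction.stabilizer ↥M ω').index := by
        apply Nat.le_of_dvd
        · exact Nat.pos_of_ne_zero Subgroup.index_ne_zero_of_finite
        · exact Subgroup.index_dvd_of_le (csub' M J hcJ hKJ)
      have hsplit := orbit_split' M hMn ω hstabM
      have hbMn : Nat.card (Quotient (MulAction.orbitRel ↥M Ω)) ≤ n := by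
        exact Nat.card_le_card_of_surjective (Quotient.mk _) (fun q => q.exists_rep)
      have hidx : (J.subgroupOf M).index * M.index = J.index :=
        Subgroup.relIndex_mul_index hJM
      have hmb : M.index ≤ 2 ^ (M.index - 1) := by
        have := Nat.lt_two_pow_self (n := M.index - 1)
        omega
      calc J.index = (J.subgroupOf M).index * M.index := hidx.symm
        _ ≤ 2 ^ (n - Nat.card (Quotient (MulAction.orbitRel ↥M Ω))) * 2 ^ (M.index - 1) :=
            Nat.mul_le_mul (hle2.trans hIH) hmb
        _ = 2 ^ (n - Nat.card (Quotient (MulAction.orbitRel ↥M Ω)) + (M.index - 1)) :=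
            (pow_add 2 _ _).symm
        _ ≤ 2 ^ (n - b) := Nat.pow_le_pow_right (by norm_num) (by omega)

private lemma map_conj_eq_iff_mem_normalizer {G : Type u} [Group G] (g : G) (H : Subgroup G) :
    H.map (MulAut.conj g).toMonoidHom = H ↔ g ∈ Subgroup.normalizer (H : Set G) := by
  rw [Subgroup.mem_normalizer_iff]
  constructor
  · intro he h
    constructor
    · intro hh
      rw [← he]
      exact ⟨h, hh, by simp [MulAut.conj_apply]⟩
    · intro hh
      rw [← he] at hh
      obtain ⟨x, hx, hxe⟩ := hh
      have hxh : x = h := by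
        have h1 : g * x * g⁻¹ = g * h * g⁻¹ := by
          simpa [MulAut.conj_apply] using hxe
        have h2 := mul_right_cancel h1
        exact mul_left_cancel h2
      rwa [← hxh]
  · intro hno
    ext x
    simp only [Subgroup.mem_map]
    constructor
    · rintro ⟨h, hh, rfl⟩
      simpa [MulAut.conj_apply] using (hno h).mp hh
    · intro hx
      refine ⟨g⁻¹ * x * g, ?_, by simp [MulAut.conj_apply]; group⟩
      have := (hno (g⁻¹ * x * g)).mpr
      apply this
      have hq : g * (g⁻¹ * x * g) * g⁻¹ = x := by group
      rwa [hq]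

theorem index_commutator_sup_kernel_le_two_pow
    {G : Type*} [Group G] [Finite G] {ι : Type*} [Finite ι] [Nonempty ι]
    (L : ι → Subgroup G)
    (hsimple : ∀ i, IsSimpleGroup ↥(L i))
    (hnonab : ∀ i, ∃ a b : ↥(L i), a * b ≠ b * a)
    (hcommute : ∀ i j, i ≠ j → ∀ x ∈ L i, ∀ y ∈ L j, Commute x y)
    (hind : ∀ i, Disjoint (L i) (⨆ (j) (_ : j ≠ i), L j))
    (hN : (⨆ i, L i).Normal)
    (hperm : ∀ (g : G) (i : ι), ∃ j, (L i).map (MulAut.conj g).toMonoidHom = L j)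
    (htrans : ∀ i j : ι, ∃ g : G, (L i).map (MulAut.conj g).toMonoidHom = L j)
    (hfaithful : Subgroup.centralizer ((⨆ i, L i : Subgroup G) : Set G) = ⊥) :
    (commutator G ⊔ ⨅ i, Subgroup.normalizer (L i : Set G)).index ≤ 2 ^ (Nat.card ι - 1) := by
  classical
  have hLne : ∀ i, L i ≠ ⊥ := by
    intro i hbot
    obtain ⟨a, b, hab⟩ := hnonab i
    apply hab
    have ha : (a : G) ∈ (⊥ : Subgroup G) := hbot ▸ a.2
    have hb : (b : G) ∈ (⊥ : Subgroup G) := hbot ▸ b.2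
    rw [Subgroup.mem_bot] at ha hb
    exact Subtype.ext (by simp [ha, hb])
  have hLinj : Function.Injective L := by
    intro i j hij
    by_contra hne
    have hne' : j ≠ i := fun h => hne h.symm
    have h1 : L i ≤ ⨆ (k) (_ : k ≠ i), L k := by
      rw [hij]
      exact le_iSup₂ (f := fun k (_ : k ≠ i) => L k) j hne'
    have h2 : L i ≤ ⊥ := le_trans (le_inf le_rfl h1) (hind i).le_bot
    exact hLne i (le_bot_iff.mp h2)
  choose phi hphi using hperm
  letI act : MulAction G ι :=
    { smul := fun g i => phi g i
      one_smul := fun i => by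
        show phi 1 i = i
        apply hLinj
        rw [← hphi 1 i]
        have : (MulAut.conj (1 : G)).toMonoidHom = MonoidHom.id G := by
          ext x; simp
        rw [this]
        exact Subgroup.map_id _
      mul_smul := fun g h i => by
        show phi (g * h) i = phi g (phi h i)
        apply hLinj
        rw [← hphi (g * h) i, ← hphi g (phi h i), ← hphi h i, Subgroup.map_map]
        congr 1
        ext x
        simp [MulAut.conj_apply, mul_assoc] }
  have hsmul : ∀ (g : G) (i : ι), g • i = phi g i := fun _ _ => rfl
  have hstab : ∀ i : ι, MulAction.stabilizer G i = Subgroup.normalizer (L i : Set G) := by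
    intro i
    ext g
    rw [MulAction.mem_stabilizer_iff, hsmul, ← map_conj_eq_iff_mem_normalizer]
    constructor
    · intro hgi
      rw [hphi g i, hgi]
    · intro he
      apply hLinj
      rw [← hphi g i, he]
  have hb1 : Nat.card (Quotient (MulAction.orbitRel G ι)) = 1 := by
    rw [Nat.card_eq_one_iff_unique]
    constructor
    · constructor
      intro x y
      obtain ⟨i, rfl⟩ := x.exists_rep
      obtain ⟨j, rfl⟩ := y.exists_rep
      obtain ⟨g, hg⟩ := htrans j i
      have hgi : g • j = i := by
        apply hLinj
        rw [hsmul, ← hphi g j, hg]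
      exact Quotient.sound (MulAction.mem_orbit_iff.mpr ⟨g, hgi⟩)
    · exact ⟨Quotient.mk _ (Classical.arbitrary ι)⟩
  have hmain := AG_aux (Nat.card G) G ι le_rfl
  rw [hb1] at hmain
  have hKeq : (⨅ i : ι, MulAction.stabilizer G i) = ⨅ i, Subgroup.normalizer (L i : Set G) := by
    exact iInf_congr hstab
  rwa [hKeq] at hmain
end

section
/- Let G be a finite group with layer E(G) and Z = Z(E(G)). Then in the quotient Ḡ = G/Z one has F(Ḡ) = F(G)/Z, E(Ḡ) = E(G)/Z, F*(Ḡ) = F*(G)/Z, and C_Ḡ(E(Ḡ)) = C_G(E(G))/Z. -/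
/-- The Fitting subgroup: join of all nilpotent normal subgroups. -/
def Fitting (G : Type*) [Group G] : Subgroup G :=
  ⨆ (N : Subgroup G) (_ : N.Normal) (_ : Group.IsNilpotent N), N

/-- Subnormality of a subgroup. -/
def IsSubnormal {G : Type*} [Group G] (H : Subgroup G) : Prop :=
  Relation.ReflTransGen (fun A B : Subgroup G => A ≤ B ∧ (A.subgroupOf B).Normal) H ⊤

/-- A subgroup is quasisimple if it is perfect and simple modulo its center. -/
def IsQuasisimple {G : Type*} [Group G] (L : Subgroup G) : Prop :=
  commutator ↥L = ⊤ ∧ IsSimpleGroup (↥L ⧸ Subgroup.center ↥L)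

/-- The layer `E(G)`: join of all components (subnormal quasisimple subgroups). -/
def Layer (G : Type*) [Group G] : Subgroup G :=
  ⨆ (L : Subgroup G) (_ : IsSubnormal L) (_ : IsQuasisimple L), L

/-- The generalized Fitting subgroup `F*(G) = F(G) E(G)`. -/
def GenFitting (G : Type*) [Group G] : Subgroup G :=
  Fitting G ⊔ Layer G

open scoped commutatorElement

namespace GenFit

open Subgroup hiding IsSubnormal


open Subgroup hiding IsSubnormal

/-- Abstract quasisimplicity of a group. -/
def QsGrp (A : Type*) [Group A] : Prop :=
  commutator A = ⊤ ∧ IsSimpleGroup (A ⧸ Subgroup.center A)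

theorem isQuasisimple_iff {G : Type*} [Group G] (L : Subgroup G) :
    IsQuasisimple L ↔ QsGrp ↥L := Iff.rfl

section Abstract

variable {A B : Type*} [Group A] [Group B]

theorem simple_congr (e : A ≃* B) (h : IsSimpleGroup A) : IsSimpleGroup B := by
  have : Nontrivial B := e.symm.toEquiv.nontrivial
  exact IsSimpleGroup.isSimpleGroup_of_surjective e.toMonoidHom e.surjective

theorem map_equiv_top (e : A ≃* B) : Subgroup.map e.toMonoidHom ⊤ = ⊤ := by
  rw [← MonoidHom.range_eq_map, MonoidHom.range_eq_top_of_surjective _ e.surjective]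

theorem map_commutator_top (f : A →* B) (hf : Function.Surjective f)
    (h : commutator A = ⊤) : commutator B = ⊤ := by
  have : Subgroup.map f (commutator A) = commutator B := by
    rw [commutator_def, commutator_def, Subgroup.map_commutator, ← MonoidHom.range_eq_map,
      MonoidHom.range_eq_top_of_surjective _ hf]
  rw [← this, h, ← MonoidHom.range_eq_map, MonoidHom.range_eq_top_of_surjective _ hf]

theorem map_center_le (f : A →* B) (hf : Function.Surjective f) :
    Subgroup.map f (Subgroup.center A) ≤ Subgroup.center B := by
  rintro - ⟨z, hz, rfl⟩
  rw [Subgroup.mem_center_iff]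
  intro b
  obtain ⟨a, rfl⟩ := hf b
  rw [← map_mul, ← map_mul, (Subgroup.mem_center_iff.mp hz a)]

theorem map_equiv_center (e : A ≃* B) :
    Subgroup.map e.toMonoidHom (Subgroup.center A) = Subgroup.center B := by
  refine le_antisymm (map_center_le _ e.surjective) ?_
  intro b hb
  refine ⟨e.symm b, ?_, by simp⟩
  have := map_center_le e.symm.toMonoidHom e.symm.surjective ⟨b, hb, rfl⟩
  exact this

theorem qs_congr (e : A ≃* B) (h : QsGrp A) : QsGrp B := by
  obtain ⟨h1, h2⟩ := h
  refine ⟨map_commutator_top e.toMonoidHom e.surjective h1, ?_⟩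
  exact simple_congr (QuotientGroup.congr _ _ e (map_equiv_center e)) h2

end Abstract



variable {A : Type*} [Group A]

theorem perfect_commutator_eq_bot {G : Type*} [Group G] {K N : Subgroup G}
    (hperf : ⁅K, K⁆ = K) (h : ⁅⁅K, N⁆, K⁆ = ⊥) : ⁅K, N⁆ = ⊥ := by
  have h2 : ⁅⁅N, K⁆, K⁆ = ⊥ := by rwa [Subgroup.commutator_comm N K]
  have h3 := Subgroup.commutator_commutator_eq_bot_of_rotate h h2
  rwa [hperf] at h3

theorem commutator_coe_eq_top_iff {G : Type*} [Group G] {L : Subgroup G} :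
    commutator ↥L = ⊤ ↔ ⁅L, L⁆ = L := by
  have hmap : Subgroup.map L.subtype (commutator ↥L) = ⁅L, L⁆ := by
    rw [commutator_def, Subgroup.map_commutator, ← MonoidHom.range_eq_map, L.range_subtype]
  constructor
  · intro h
    rw [← hmap, h, ← MonoidHom.range_eq_map, L.range_subtype]
  · intro h
    apply Subgroup.map_injective L.subtype_injective
    rw [hmap, h, ← MonoidHom.range_eq_map, L.range_subtype]

theorem comap_mk_center_eq (hperf : commutator A = ⊤) (N : Subgroup A) [N.Normal]
    (hN : N ≤ center A) :
    Subgroup.comap (QuotientGroup.mk' N) (center (A ⧸ N)) = center A := by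
  apply le_antisymm
  · set W := Subgroup.comap (QuotientGroup.mk' N) (center (A ⧸ N)) with hW
    have hWc : ⁅W, (⊤ : Subgroup A)⁆ ≤ center A := by
      refine le_trans ?_ hN
      rw [Subgroup.commutator_le]
      intro w hw g _
      have h1 : (QuotientGroup.mk' N) ⁅w, g⁆ = 1 := by
        rw [map_commutatorElement, commutatorElement_eq_one_iff_commute]
        exact (Subgroup.mem_center_iff.mp hw _).symm
      exact (QuotientGroup.eq_one_iff _).mp h1
    have h1 : ⁅⁅(⊤ : Subgroup A), W⁆, (⊤ : Subgroup A)⁆ = ⊥ := by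
      rw [Subgroup.commutator_eq_bot_iff_le_centralizer, Subgroup.commutator_comm]
      exact le_trans hWc (center_le_centralizer _)
    have h2 : ⁅⁅W, (⊤ : Subgroup A)⁆, (⊤ : Subgroup A)⁆ = ⊥ := by
      rw [Subgroup.commutator_eq_bot_iff_le_centralizer]
      exact le_trans hWc (center_le_centralizer _)
    have h3 := Subgroup.commutator_commutator_eq_bot_of_rotate h1 h2
    rw [← _root_.commutator_def, hperf] at h3
    rw [Subgroup.commutator_comm, Subgroup.commutator_eq_bot_iff_le_centralizer] at h3
    rwa [Subgroup.coe_top, Subgroup.centralizer_univ] at h3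
  · intro a ha
    simp only [Subgroup.mem_comap]
    rw [Subgroup.mem_center_iff]
    intro x
    induction x using QuotientGroup.induction_on with
    | H g =>
      show ((g * a : A) : A ⧸ N) = ((a * g : A) : A ⧸ N)
      rw [Subgroup.mem_center_iff.mp ha g]

noncomputable def quotCenterIso (hperf : commutator A = ⊤) (N : Subgroup A) [N.Normal]
    (hN : N ≤ center A) :
    ((A ⧸ N) ⧸ center (A ⧸ N)) ≃* (A ⧸ center A) := by
  have hmap : Subgroup.map (QuotientGroup.mk' N) (center A) = center (A ⧸ N) := by
    rw [← comap_mk_center_eq hperf N hN,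
      Subgroup.map_comap_eq_self_of_surjective (QuotientGroup.mk'_surjective N)]
  exact (QuotientGroup.quotientMulEquivOfEq hmap.symm).trans
    (QuotientGroup.quotientQuotientEquivQuotient N (center A) hN)



variable {A : Type*} [Group A]

theorem qs_nontrivial (h : QsGrp A) : Nontrivial A := by
  rcases h with ⟨-, h2⟩
  rcases subsingleton_or_nontrivial A with hs | hn
  · have : Subsingleton (A ⧸ center A) := Quotient.instSubsingletonQuotient _
    exact absurd h2.toNontrivial (not_nontrivial_iff_subsingleton.mpr this)
  · exact hn

/-- A normal subgroup of a quasisimple group is central or the whole group. -/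
theorem normal_le_center_or_top (hA : QsGrp A) (N : Subgroup A) (hN : N.Normal) :
    N ≤ center A ∨ N = ⊤ := by
  have hmapn : (Subgroup.map (QuotientGroup.mk' (center A)) N).Normal :=
    hN.map _ (QuotientGroup.mk'_surjective _)
  rcases hA.2.eq_bot_or_eq_top_of_normal _ hmapn with h | h
  · left
    rw [Subgroup.map_eq_bot_iff, QuotientGroup.ker_mk'] at h
    exact h
  · right
    -- A/N is abelian: every coset is represented by a central element
    have hrep : ∀ g : A, ∃ c ∈ center A, (g : A ⧸ N) = (c : A ⧸ N) := by
      intro g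
      have : ((g : A ⧸ center A)) ∈ Subgroup.map (QuotientGroup.mk' (center A)) N := by
        rw [h]; trivial
      obtain ⟨n, hn', hng⟩ := this
      refine ⟨n⁻¹ * g, ?_, ?_⟩
      · have hng' : ((n : A) : A ⧸ center A) = ((g : A) : A ⧸ center A) := hng
        exact QuotientGroup.eq.mp hng'
      · have : (g : A ⧸ N) = ((n * (n⁻¹ * g) : A) : A ⧸ N) := by group
        rw [this]
        push_cast
        rw [QuotientGroup.mk_mul]
        have hn1 : ((n : A) : A ⧸ N) = 1 := (QuotientGroup.eq_one_iff _).mpr hn'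
        rw [hn1, one_mul]
    have hcomm : ∀ x y : A ⧸ N, x * y = y * x := by
      intro x y
      induction x using QuotientGroup.induction_on with
      | H g₁ =>
        induction y using QuotientGroup.induction_on with
        | H g₂ =>
          obtain ⟨c₁, hc₁, e₁⟩ := hrep g₁
          obtain ⟨c₂, hc₂, e₂⟩ := hrep g₂
          rw [e₁, e₂, ← QuotientGroup.mk_mul, ← QuotientGroup.mk_mul,
            Subgroup.mem_center_iff.mp hc₂ c₁]
    rw [eq_top_iff, ← hA.1, _root_.commutator_def, Subgroup.commutator_le]
    intro g₁ _ g₂ _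
    rw [← QuotientGroup.eq_one_iff (N := N)]
    show (QuotientGroup.mk' N) ⁅g₁, g₂⁆ = 1
    rw [map_commutatorElement, commutatorElement_eq_one_iff_commute]
    exact hcomm _ _

theorem qs_not_nilpotent [Finite A] (h : QsGrp A) : ¬ Group.IsNilpotent A := by
  intro hnil
  have hsolv : Group.IsSolvable A := inferInstance
  obtain ⟨n, hn⟩ := hsolv.solvable
  have hds : ∀ m : ℕ, derivedSeries A m = ⊤ := by
    intro m
    induction m with
    | zero => exact derivedSeries_zero A
    | succ k ih => rw [derivedSeries_succ, ih, ← _root_.commutator_def, h.1]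
  rw [hds n] at hn
  have hone : ∀ a : A, a = 1 := fun a => by
    have : a ∈ (⊥ : Subgroup A) := hn ▸ Subgroup.mem_top a
    simpa using this
  exact absurd (qs_nontrivial h)
    (not_nontrivial_iff_subsingleton.mpr ⟨fun a b => by rw [hone a, hone b]⟩)



variable {G : Type*} [Group G]

theorem isSubnormal_top : IsSubnormal (⊤ : Subgroup G) := Relation.ReflTransGen.refl

 theorem _root_.IsSubnormal.head_step {K H : Subgroup G} (hKH : K ≤ H) (hn : (K.subgroupOf H).Normal)
    (h : IsSubnormal H) : IsSubnormal K := Relation.ReflTransGen.head ⟨hKH, hn⟩ h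

theorem normal_of_rel_top {H : Subgroup G} (h : (H.subgroupOf (⊤ : Subgroup G)).Normal) :
    H.Normal := by
  constructor
  intro n hn g
  have := h.conj_mem ⟨n, mem_top n⟩ (mem_subgroupOf.mpr hn) ⟨g, mem_top g⟩
  simpa [mem_subgroupOf] using this

theorem subgroupOf_map_normal {G' : Type*} [Group G'] (f : G →* G') {A B : Subgroup G}
    (hAB : A ≤ B) (h : (A.subgroupOf B).Normal) :
    (((A.map f)).subgroupOf (B.map f)).Normal := by
  constructor
  rintro ⟨x, hxB⟩ hx ⟨y, hyB⟩
  rw [mem_subgroupOf] at hx ⊢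
  obtain ⟨a, haA, rfl⟩ := hx
  obtain ⟨b, hbB, rfl⟩ := hyB
  refine ⟨b * a * b⁻¹, ?_, by simp⟩
  have := h.conj_mem ⟨a, hAB haA⟩ (mem_subgroupOf.mpr haA) ⟨b, hbB⟩
  simpa [mem_subgroupOf] using this

theorem subgroupOf_comap_normal {G' : Type*} [Group G'] (f : G →* G') {A B : Subgroup G'}
    (hAB : A ≤ B) (h : (A.subgroupOf B).Normal) :
    (((A.comap f)).subgroupOf (B.comap f)).Normal := by
  constructor
  rintro ⟨x, hxB⟩ hx ⟨y, hyB⟩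
  rw [mem_subgroupOf] at hx ⊢
  have := h.conj_mem ⟨f x, hxB⟩ (mem_subgroupOf.mpr hx) ⟨f y, hyB⟩
  rw [mem_subgroupOf] at this
  simpa [mem_comap] using this

theorem inf_subgroupOf_normal_of_rel {B₀ : Subgroup G} {A B : Subgroup G}
    (hAB : A ≤ B) (h : (A.subgroupOf B).Normal) :
    (((A ⊓ B₀).subgroupOf B₀).subgroupOf ((B ⊓ B₀).subgroupOf B₀)).Normal := by
  constructor
  rintro ⟨⟨x, hxB₀⟩, hxB⟩ hx ⟨⟨y, hyB₀⟩, hyB⟩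
  rw [mem_subgroupOf] at hx hxB hyB ⊢
  rw [mem_subgroupOf] at hx ⊢
  rw [mem_inf] at hx ⊢
  refine ⟨?_, mul_mem (mul_mem hyB₀ hx.2) (inv_mem hyB₀)⟩
  have := h.conj_mem ⟨x, hAB hx.1⟩ (mem_subgroupOf.mpr hx.1) ⟨y, hyB.1⟩
  simpa [mem_subgroupOf] using this

 theorem _root_.IsSubnormal.map {G' : Type*} [Group G'] {H : Subgroup G} (h : IsSubnormal H)
    (f : G →* G') (hf : Function.Surjective f) : IsSubnormal (H.map f) := by
  have key := Relation.ReflTransGen.lift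
    (p := fun A B : Subgroup G' => A ≤ B ∧ (A.subgroupOf B).Normal) (Subgroup.map f)
    (fun A B hr => And.intro (Subgroup.map_mono hr.1) (subgroupOf_map_normal f hr.1 hr.2)) _ _ h
  rwa [Function.onFun, ← MonoidHom.range_eq_map, MonoidHom.range_eq_top_of_surjective _ hf] at key

 theorem _root_.IsSubnormal.comap {G' : Type*} [Group G'] {H : Subgroup G'} (h : IsSubnormal H)
    (f : G →* G') : IsSubnormal (H.comap f) := by
  have key := Relation.ReflTransGen.lift
    (p := fun A B : Subgroup G => A ≤ B ∧ (A.subgroupOf B).Normal) (Subgroup.comap f)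
    (fun A B hr => And.intro (Subgroup.comap_mono hr.1) (subgroupOf_comap_normal f hr.1 hr.2)) _ _ h
  rwa [Function.onFun, Subgroup.comap_top] at key

 theorem _root_.IsSubnormal.inf_subgroupOf {H : Subgroup G} (h : IsSubnormal H) (B₀ : Subgroup G) :
    IsSubnormal ((H ⊓ B₀).subgroupOf B₀) := by
  have key := Relation.ReflTransGen.lift
    (p := fun A B : Subgroup ↥B₀ => A ≤ B ∧ (A.subgroupOf B).Normal)
    (fun A : Subgroup G => (A ⊓ B₀).subgroupOf B₀)
    (fun A B hr => And.intro
      (Subgroup.comap_mono (inf_le_inf_right B₀ hr.1))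
      (inf_subgroupOf_normal_of_rel hr.1 hr.2)) _ _ h
  simp only [Function.onFun] at key
  rwa [show ((⊤ : Subgroup G) ⊓ B₀).subgroupOf B₀ = ⊤ by rw [top_inf_eq, subgroupOf_self]] at key

 theorem _root_.IsSubnormal.subgroupOf_of_le {H B₀ : Subgroup G} (h : IsSubnormal H) (hle : H ≤ B₀) :
    IsSubnormal (H.subgroupOf B₀) := by
  have := h.inf_subgroupOf B₀
  rwa [inf_eq_left.mpr hle] at this

theorem exists_proper_normal {K : Subgroup G} (h : IsSubnormal K) :
    K = ⊤ ∨ ∃ H : Subgroup G, H ≠ ⊤ ∧ H.Normal ∧ K ≤ H := by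
  induction h using Relation.ReflTransGen.head_induction_on with
  | refl => exact Or.inl rfl
  | @head a c hab hbt ih =>
    rcases ih with rfl | ⟨H, hH1, hH2, hH3⟩
    · by_cases ha : a = (⊤ : Subgroup G)
      · exact Or.inl ha
      · exact Or.inr ⟨a, ha, normal_of_rel_top hab.2, le_rfl⟩
    · exact Or.inr ⟨H, hH1, hH2, hab.1.trans hH3⟩

theorem card_lt_of_ne_top [Finite G] {H : Subgroup G} (h : H ≠ ⊤) :
    Nat.card H < Nat.card G := by
  have hle : Nat.card H ≤ Nat.card G := by
    have := Subgroup.card_le_of_le (le_top (a := H))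
    rwa [Subgroup.card_top] at this
  rcases lt_or_eq_of_le hle with hlt | heq
  · exact hlt
  · exact absurd ((Subgroup.card_eq_iff_eq_top H).mp heq) h

theorem commutator_eq_bot_of_subgroupOf {B K L : Subgroup G} (hK : K ≤ B) (hL : L ≤ B)
    (h : ⁅K.subgroupOf B, L.subgroupOf B⁆ = ⊥) : ⁅K, L⁆ = ⊥ := by
  have h2 := congrArg (Subgroup.map B.subtype) h
  rwa [Subgroup.map_commutator, subgroupOf_map_subtype, subgroupOf_map_subtype,
    inf_eq_left.mpr hK, inf_eq_left.mpr hL, Subgroup.map_bot] at h2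


universe u

section Core

variable {G : Type*} [Group G]

theorem qs_subgroupOf {K H : Subgroup G} (hK : IsQuasisimple K) (hle : K ≤ H) :
    IsQuasisimple (K.subgroupOf H) :=
  qs_congr (Subgroup.subgroupOfEquivOfLe hle).symm hK

theorem commutator_eq_bot_of_le_center {K L : Subgroup G} (h : L ≤ center G) :
    ⁅K, L⁆ = ⊥ := by
  rw [Subgroup.commutator_eq_bot_iff_le_centralizer]
  intro g _
  rw [Subgroup.mem_centralizer_iff]
  intro m hm
  exact (Subgroup.mem_center_iff.mp (h hm) g).symm

theorem inf_subgroupOf_normal {N H : Subgroup G} (hN : N.Normal) :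
    ((N ⊓ H).subgroupOf H).Normal := by
  constructor
  rintro ⟨x, hxH⟩ hx ⟨y, hyH⟩
  rw [mem_subgroupOf] at hx ⊢
  rw [mem_inf] at hx ⊢
  exact ⟨hN.conj_mem x hx.1 y, mul_mem (mul_mem hyH hx.2) (inv_mem hyH)⟩

theorem main_dichotomy_aux :
    ∀ n : ℕ, ∀ (G : Type u) [Group G] [Finite G], Nat.card G ≤ n →
      ∀ K N : Subgroup G, IsSubnormal K → IsQuasisimple K → N.Normal →
        K ≤ N ∨ ⁅K, N⁆ = ⊥ := by
  intro n
  induction n with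
  | zero =>
    intro G _ _ hcard
    exact absurd hcard (by have := Nat.card_pos (α := G); omega)
  | succ n ih =>
    intro G _ _ hcard K N hKsub hKqs hN
    rcases exists_proper_normal hKsub with rfl | ⟨H, hHne, hHnorm, hKH⟩
    · rcases normal_le_center_or_top (qs_congr Subgroup.topEquiv hKqs) N hN with hc | htop
      · exact Or.inr (commutator_eq_bot_of_le_center hc)
      · exact Or.inl (htop ▸ le_rfl)
    · have hcard' : Nat.card ↥H ≤ n := by
        have := card_lt_of_ne_top (G := G) hHne
        omega
      have hK'sub : IsSubnormal (K.subgroupOf H) := hKsub.subgroupOf_of_le hKH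
      have hK'qs : IsQuasisimple (K.subgroupOf H) := qs_subgroupOf hKqs hKH
      rcases ih ↥H hcard' (K.subgroupOf H) ((N ⊓ H).subgroupOf H) hK'sub hK'qs
          (inf_subgroupOf_normal hN) with hle | hbot
      · left
        intro k hk
        have h1 : (⟨k, hKH hk⟩ : ↥H) ∈ K.subgroupOf H := mem_subgroupOf.mpr hk
        have h2 := hle h1
        rw [mem_subgroupOf, mem_inf] at h2
        exact h2.1
      · right
        have hKNH : ⁅K, N ⊓ H⁆ = ⊥ :=
          commutator_eq_bot_of_subgroupOf hKH inf_le_right hbot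
        have hsub : ⁅K, N⁆ ≤ N ⊓ H := by
          haveI := hN; haveI := hHnorm
          refine le_inf (Subgroup.commutator_le_right K N) ?_
          calc ⁅K, N⁆ ≤ ⁅H, N⁆ := Subgroup.commutator_mono hKH le_rfl
            _ ≤ H := Subgroup.commutator_le_left H N
        have h3 : ⁅⁅K, N⁆, K⁆ = ⊥ := by
          rw [eq_bot_iff]
          calc ⁅⁅K, N⁆, K⁆ ≤ ⁅N ⊓ H, K⁆ := Subgroup.commutator_mono hsub le_rfl
            _ = ⁅K, N ⊓ H⁆ := Subgroup.commutator_comm _ _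
            _ = ⊥ := hKNH
        exact perfect_commutator_eq_bot (commutator_coe_eq_top_iff.mp hKqs.1) h3

theorem main_dichotomy {G : Type u} [Group G] [Finite G] {K N : Subgroup G}
    (h1 : IsSubnormal K) (h2 : IsQuasisimple K) (h3 : N.Normal) :
    K ≤ N ∨ ⁅K, N⁆ = ⊥ :=
  main_dichotomy_aux (Nat.card G) G le_rfl K N h1 h2 h3

theorem components_commute_aux :
    ∀ n : ℕ, ∀ (G : Type u) [Group G] [Finite G], Nat.card G ≤ n →
      ∀ K L : Subgroup G, IsSubnormal K → IsQuasisimple K →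
        IsSubnormal L → IsQuasisimple L → K ≠ L → ⁅K, L⁆ = ⊥ := by
  intro n
  induction n with
  | zero =>
    intro G _ _ hcard
    exact absurd hcard (by have := Nat.card_pos (α := G); omega)
  | succ n ih =>
    intro G _ _ hcard K L hKsub hKqs hLsub hLqs hne
    rcases exists_proper_normal hKsub with rfl | ⟨H, hHne, hHnorm, hKH⟩
    · rcases exists_proper_normal hLsub with rfl | ⟨H, hHne, hHnorm, hLH⟩
      · exact absurd rfl hne
      · rcases normal_le_center_or_top (qs_congr Subgroup.topEquiv hKqs) H hHnorm with hc | htop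
        · exact commutator_eq_bot_of_le_center (hLH.trans hc)
        · exact absurd htop hHne
    · by_cases hLH : L ≤ H
      · have hcard' : Nat.card ↥H ≤ n := by
          have := card_lt_of_ne_top (G := G) hHne
          omega
        have hne' : K.subgroupOf H ≠ L.subgroupOf H := by
          intro heq
          apply hne
          have := congrArg (Subgroup.map H.subtype) heq
          rwa [subgroupOf_map_subtype, subgroupOf_map_subtype, inf_eq_left.mpr hKH,
            inf_eq_left.mpr hLH] at this
        exact commutator_eq_bot_of_subgroupOf hKH hLH
          (ih ↥H hcard' _ _ (hKsub.subgroupOf_of_le hKH) (qs_subgroupOf hKqs hKH)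
            (hLsub.subgroupOf_of_le hLH) (qs_subgroupOf hLqs hLH) hne')
      · rcases main_dichotomy hLsub hLqs hHnorm with h | h
        · exact absurd h hLH
        · rw [eq_bot_iff]
          calc ⁅K, L⁆ = ⁅L, K⁆ := Subgroup.commutator_comm _ _
            _ ≤ ⁅L, H⁆ := Subgroup.commutator_mono le_rfl hKH
            _ = ⊥ := h

theorem components_commute {G : Type u} [Group G] [Finite G] {K L : Subgroup G}
    (h1 : IsSubnormal K) (h2 : IsQuasisimple K) (h3 : IsSubnormal L) (h4 : IsQuasisimple L)
    (h5 : K ≠ L) : ⁅K, L⁆ = ⊥ :=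
  components_commute_aux (Nat.card G) G le_rfl K L h1 h2 h3 h4 h5

theorem component_centralizes_nilpotent {G : Type u} [Group G] [Finite G] {K N : Subgroup G}
    (h1 : IsSubnormal K) (h2 : IsQuasisimple K) (h3 : N.Normal)
    (h4 : Group.IsNilpotent ↥N) : ⁅K, N⁆ = ⊥ := by
  rcases main_dichotomy h1 h2 h3 with hle | hbot
  · exfalso
    have hn1 : Group.IsNilpotent ↥(K.subgroupOf N) := @Subgroup.isNilpotent _ _ _ h4
    have hn2 : Group.IsNilpotent ↥K :=
      (Group.isNilpotent_congr (Subgroup.subgroupOfEquivOfLe hle)).mp hn1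
    exact qs_not_nilpotent h2 hn2
  · exact hbot

end Core

section Quot

variable {A : Type*} [Group A]

theorem qs_quot (hA : QsGrp A) (N : Subgroup A) [N.Normal] (hN : N ≤ center A) :
    QsGrp (A ⧸ N) :=
  ⟨map_commutator_top (QuotientGroup.mk' N) (QuotientGroup.mk'_surjective N) hA.1,
   simple_congr (quotCenterIso hA.1 N hN).symm hA.2⟩

theorem qs_lift (hperf : commutator A = ⊤) (N : Subgroup A) [N.Normal]
    (hN : N ≤ center A) (h : QsGrp (A ⧸ N)) : QsGrp A :=
  ⟨hperf, simple_congr (quotCenterIso hperf N hN) h.2⟩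

theorem nilpotent_of_central_quot (N : Subgroup A) [N.Normal]
    (hN : N ≤ center A) (h : Group.IsNilpotent (A ⧸ N)) : Group.IsNilpotent A := by
  apply of_quotient_center_nilpotent
  have hf : Function.Surjective
      (QuotientGroup.map N (center A) (MonoidHom.id A) (by simpa using hN)) := by
    intro x
    induction x using QuotientGroup.induction_on with
    | H g => exact ⟨QuotientGroup.mk g, rfl⟩
  exact nilpotent_of_surjective _ hf

variable {G : Type*} [Group G] (Z : Subgroup G) [hZn : Z.Normal]

/-- Restriction of the quotient map to a subgroup. -/
def phi (X : Subgroup G) : ↥X →* G ⧸ Z := (QuotientGroup.mk' Z).comp X.subtype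

theorem phi_ker (X : Subgroup G) : (phi Z X).ker = Z.subgroupOf X := by
  ext x
  simp [phi, MonoidHom.mem_ker, mem_subgroupOf, QuotientGroup.eq_one_iff]

theorem phi_range (X : Subgroup G) : (phi Z X).range = X.map (QuotientGroup.mk' Z) := by
  rw [phi, MonoidHom.range_comp, range_subtype]

noncomputable def quotIsoMap (X : Subgroup G) :
    (↥X ⧸ Z.subgroupOf X) ≃* ↥(X.map (QuotientGroup.mk' Z)) := by
  haveI : (Z.subgroupOf X).Normal := hZn.subgroupOf X
  exact (QuotientGroup.quotientMulEquivOfEq (phi_ker Z X).symm).trans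
    ((QuotientGroup.quotientKerEquivRange (phi Z X)).trans
      (MulEquiv.subgroupCongr (phi_range Z X)))

theorem component_le_layer {L : Subgroup G} (h1 : IsSubnormal L) (h2 : IsQuasisimple L) :
    L ≤ Layer G :=
  le_iSup_of_le L (le_iSup_of_le h1 (le_iSup_of_le h2 le_rfl))

theorem layer_perfect_piece {L : Subgroup G} (h2 : IsQuasisimple L) : ⁅L, L⁆ = L :=
  commutator_coe_eq_top_iff.mp h2.1

/-- If `⁅M, L⁆ ≤ Z` for every component `L`, and `Z` centralizes the layer,
then `M` centralizes the layer. -/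
theorem le_centralizer_layer {M : Subgroup G}
    (hZc : Z ≤ centralizer ((Layer G : Subgroup G) : Set G))
    (h : ∀ L : Subgroup G, IsSubnormal L → IsQuasisimple L → ⁅M, L⁆ ≤ Z) :
    M ≤ centralizer ((Layer G : Subgroup G) : Set G) := by
  rw [Subgroup.le_centralizer_iff]
  refine iSup_le fun L => iSup_le fun h1 => iSup_le fun h2 => ?_
  rw [← Subgroup.le_centralizer_iff]
  have hZL : Z ≤ centralizer (L : Set G) :=
    le_trans hZc (Subgroup.centralizer_le (component_le_layer h1 h2))
  have hLM : ⁅L, M⁆ = ⊥ := by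
    apply perfect_commutator_eq_bot (layer_perfect_piece h2)
    rw [Subgroup.commutator_eq_bot_iff_le_centralizer]
    calc ⁅L, M⁆ = ⁅M, L⁆ := Subgroup.commutator_comm _ _
      _ ≤ Z := h L h1 h2
      _ ≤ centralizer (L : Set G) := hZL
  rw [← Subgroup.commutator_eq_bot_iff_le_centralizer, Subgroup.commutator_comm]
  exact hLM

/-- The image of a component in `G ⧸ Z` is quasisimple, provided `Z` centralizes it. -/
theorem qs_map_mk {L : Subgroup G} (hqs : IsQuasisimple L)
    (hcent : Z ≤ centralizer (L : Set G)) :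
    IsQuasisimple (L.map (QuotientGroup.mk' Z)) := by
  haveI : (Z.subgroupOf L).Normal := hZn.subgroupOf L
  have hker : Z.subgroupOf L ≤ center ↥L := by
    rintro ⟨x, hxL⟩ hx
    rw [mem_subgroupOf] at hx
    rw [Subgroup.mem_center_iff]
    rintro ⟨g, hgL⟩
    apply Subtype.ext
    exact (Subgroup.mem_centralizer_iff.mp (hcent hx) g hgL)
  exact qs_congr (quotIsoMap Z L) (qs_quot hqs (Z.subgroupOf L) hker)

end Quot

section Lift

variable {G : Type*} [Group G] [Finite G] (Z : Subgroup G) [hZn : Z.Normal]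

/-- A component of `G ⧸ Z` whose preimage centralizes `Z` lifts to a component of `G`. -/
theorem exists_component_lift {K' : Subgroup (G ⧸ Z)}
    (hK'sub : IsSubnormal K') (hK'qs : IsQuasisimple K')
    (hMC : Subgroup.comap (QuotientGroup.mk' Z) K' ≤ centralizer (Z : Set G)) :
    ∃ D : Subgroup G, IsSubnormal D ∧ IsQuasisimple D ∧
      D.map (QuotientGroup.mk' Z) = K' := by
  set M := Subgroup.comap (QuotientGroup.mk' Z) K' with hMdef
  have hMsub : IsSubnormal M := hK'sub.comap _
  have hmapM : M.map (QuotientGroup.mk' Z) = K' :=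
    Subgroup.map_comap_eq_self_of_surjective (QuotientGroup.mk'_surjective Z) K'
  set d : ℕ → Subgroup G := fun n => (derivedSeries ↥M n).map M.subtype with hd
  have hantitone : ∀ n, d (n + 1) ≤ d n := by
    intro n
    apply Subgroup.map_mono
    rw [derivedSeries_succ]
    haveI := derivedSeries_normal (G := ↥M) n
    exact Subgroup.commutator_le_left _ _
  obtain ⟨m, hm⟩ : ∃ m, d (m + 1) = d m := by
    by_contra hcon
    push_neg at hcon
    have hlt : ∀ n, Nat.card (d (n + 1)) < Nat.card (d n) := by
      intro n
      rcases lt_or_eq_of_le (Subgroup.card_le_of_le (hantitone n)) with h | h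
      · exact h
      · exact absurd (Subgroup.eq_of_le_of_card_ge (hantitone n) (le_of_eq h.symm)) (hcon n)
    have hbound : ∀ n, Nat.card (d n) + n ≤ Nat.card (d 0) := by
      intro n
      induction n with
      | zero => omega
      | succ k ihk => have := hlt k; omega
    have h1 := hbound (Nat.card (d 0) + 1)
    have h2 : 0 < Nat.card (d (Nat.card (d 0) + 1)) := Nat.card_pos
    omega
  set D := d m with hD
  have hDperf : ⁅D, D⁆ = D := by
    have hstep : d (m + 1) = ⁅d m, d m⁆ := by
      show (derivedSeries ↥M (m + 1)).map M.subtype = _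
      rw [derivedSeries_succ, Subgroup.map_commutator]
    rw [← hstep, hm]
  have hDperf' : commutator ↥D = ⊤ := commutator_coe_eq_top_iff.mpr hDperf
  have hDM : D ≤ M := Subgroup.map_subtype_le _
  have hmapD : D.map (QuotientGroup.mk' Z) = K' := by
    set χ : ↥M →* ↥K' :=
      ((QuotientGroup.mk' Z).comp M.subtype).codRestrict K' (fun x => x.2) with hχ
    have hχsurj : Function.Surjective χ := by
      rintro ⟨y, hy⟩
      rw [← hmapM] at hy
      obtain ⟨x, hxM, hx⟩ := hy
      exact ⟨⟨x, hxM⟩, Subtype.ext hx⟩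
    have hK'ds : ∀ k : ℕ, derivedSeries ↥K' k = ⊤ := by
      intro k
      induction k with
      | zero => exact derivedSeries_zero _
      | succ k ihk => rw [derivedSeries_succ, ihk, ← _root_.commutator_def, hK'qs.1]
    have h1 : (derivedSeries ↥M m).map χ = ⊤ := by
      rw [map_derivedSeries_eq hχsurj, hK'ds]
    have h2 : D.map (QuotientGroup.mk' Z) = ((derivedSeries ↥M m).map χ).map K'.subtype := by
      rw [Subgroup.map_map, Subgroup.map_map]
      rfl
    rw [h2, h1, ← MonoidHom.range_eq_map, range_subtype]
  have hDsubn : IsSubnormal D := by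
    refine IsSubnormal.head_step hDM ?_ hMsub
    have heq : D.subgroupOf M = derivedSeries ↥M m :=
      Subgroup.comap_map_eq_self_of_injective M.subtype_injective _
    rw [heq]
    exact derivedSeries_normal (G := ↥M) m
  haveI : (Z.subgroupOf D).Normal := hZn.subgroupOf D
  have hkerc : Z.subgroupOf D ≤ center ↥D := by
    rintro ⟨x, hxD⟩ hx
    rw [mem_subgroupOf] at hx
    rw [Subgroup.mem_center_iff]
    rintro ⟨g, hgD⟩
    apply Subtype.ext
    show g * x = x * g
    exact (Subgroup.mem_centralizer_iff.mp (hMC (hDM hgD)) x hx).symm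
  have hqsD : IsQuasisimple D := by
    rw [isQuasisimple_iff]
    refine qs_lift hDperf' (Z.subgroupOf D) hkerc ?_
    exact qs_congr ((quotIsoMap Z D).trans (MulEquiv.subgroupCongr hmapD)).symm hK'qs
  exact ⟨D, hDsubn, hqsD, hmapD⟩

end Lift

end GenFit

open GenFit
open Subgroup hiding IsSubnormal

theorem quotient_center_layer_preserves_fitting_layer
    (G : Type*) [Group G] [Finite G] (Z : Subgroup G)
    (hZ : Z = Layer G ⊓ Subgroup.centralizer ((Layer G : Subgroup G) : Set G))
    [Z.Normal] :
    Subgroup.map (QuotientGroup.mk' Z) (Fitting G) = Fitting (G ⧸ Z) ∧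
      Subgroup.map (QuotientGroup.mk' Z) (Layer G) = Layer (G ⧸ Z) ∧
      Subgroup.map (QuotientGroup.mk' Z) (GenFitting G) = GenFitting (G ⧸ Z) ∧
      Subgroup.map (QuotientGroup.mk' Z)
          (Subgroup.centralizer ((Layer G : Subgroup G) : Set G))
        = Subgroup.centralizer ((Layer (G ⧸ Z) : Subgroup (G ⧸ Z)) : Set (G ⧸ Z)) := by
  have hZE : Z ≤ Layer G := hZ ▸ inf_le_left
  have hZC : Z ≤ Subgroup.centralizer ((Layer G : Subgroup G) : Set G) := hZ ▸ inf_le_right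
  set mk := QuotientGroup.mk' Z with hmk
  have hmksurj : Function.Surjective mk := QuotientGroup.mk'_surjective Z
  -- images of components are components
  have himg : ∀ L : Subgroup G, IsSubnormal L → IsQuasisimple L →
      IsSubnormal (L.map mk) ∧ IsQuasisimple (L.map mk) := by
    intro L h1 h2
    refine ⟨h1.map mk hmksurj, ?_⟩
    exact qs_map_mk Z h2 (hZC.trans (Subgroup.centralizer_le (component_le_layer h1 h2)))
  -- membership of Z in any comap
  have hZle : ∀ S : Subgroup (G ⧸ Z), Z ≤ S.comap mk := by
    intro S z hz
    have : mk z = 1 := (QuotientGroup.eq_one_iff z).mpr hz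
    rw [Subgroup.mem_comap, this]
    exact one_mem S
  -- commutator into Z from commuting images
  have hcommZ : ∀ (M : Subgroup G) (L : Subgroup G),
      (∀ g ∈ M, ∀ l ∈ L, ⁅(mk g : G ⧸ Z), mk l⁆ = 1) → ⁅M, L⁆ ≤ Z := by
    intro M L h
    rw [Subgroup.commutator_le]
    intro g hg l hl
    rw [← QuotientGroup.eq_one_iff (N := Z)]
    have : mk ⁅g, l⁆ = ⁅mk g, mk l⁆ := map_commutatorElement mk g l
    rw [show ((⁅g, l⁆ : G) : G ⧸ Z) = mk ⁅g, l⁆ from rfl, this]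
    exact h g hg l hl
  -- Layer, ≤ direction
  have hlayer_le : (Layer G).map mk ≤ Layer (G ⧸ Z) := by
    rw [Layer, Subgroup.map_iSup]
    refine iSup_le fun L => ?_
    rw [Subgroup.map_iSup]
    refine iSup_le fun h1 => ?_
    rw [Subgroup.map_iSup]
    refine iSup_le fun h2 => ?_
    exact component_le_layer (himg L h1 h2).1 (himg L h1 h2).2
  -- Layer, ≥ direction
  have hlayer_ge : Layer (G ⧸ Z) ≤ (Layer G).map mk := by
    rw [Layer]
    refine iSup_le fun K' => iSup_le fun h1 => iSup_le fun h2 => ?_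
    by_cases hex : ∃ L : Subgroup G, IsSubnormal L ∧ IsQuasisimple L ∧ L.map mk = K'
    · obtain ⟨L, hL1, hL2, rfl⟩ := hex
      exact Subgroup.map_mono (component_le_layer hL1 hL2)
    · push_neg at hex
      have hcomm : ∀ L : Subgroup G, IsSubnormal L → IsQuasisimple L →
          ⁅Subgroup.comap mk K', L⁆ ≤ Z := by
        intro L hL1 hL2
        have hKL : ⁅K', L.map mk⁆ = ⊥ :=
          components_commute h1 h2 (himg L hL1 hL2).1 (himg L hL1 hL2).2
            (fun heq => hex L hL1 hL2 heq.symm)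
        refine hcommZ _ _ fun g hg l hl => ?_
        have hmem : ⁅(mk g : G ⧸ Z), mk l⁆ ∈ ⁅K', L.map mk⁆ :=
          Subgroup.commutator_mem_commutator (Subgroup.mem_comap.mp hg) ⟨l, hl, rfl⟩
        rw [hKL] at hmem
        exact Subgroup.mem_bot.mp hmem
      have hMC : Subgroup.comap mk K' ≤ centralizer ((Layer G : Subgroup G) : Set G) :=
        le_centralizer_layer Z hZC hcomm
      obtain ⟨D, hD1, hD2, hD3⟩ := exists_component_lift Z h1 h2
        (hMC.trans (Subgroup.centralizer_le hZE))
      rw [← hD3]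
      exact Subgroup.map_mono (component_le_layer hD1 hD2)
  have hlayer : (Layer G).map mk = Layer (G ⧸ Z) := le_antisymm hlayer_le hlayer_ge
  -- Fitting, ≤ direction
  have hfit_le : (Fitting G).map mk ≤ Fitting (G ⧸ Z) := by
    rw [Fitting, Subgroup.map_iSup]
    refine iSup_le fun N => ?_
    rw [Subgroup.map_iSup]
    refine iSup_le fun hN => ?_
    rw [Subgroup.map_iSup]
    refine iSup_le fun hnil => ?_
    have h1 : (N.map mk).Normal := hN.map mk hmksurj
    have h2 : Group.IsNilpotent ↥(N.map mk) :=
      nilpotent_of_surjective (mk.subgroupMap N) (mk.subgroupMap_surjective N)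
    exact le_iSup_of_le (N.map mk) (le_iSup_of_le h1 (le_iSup_of_le h2 le_rfl))
  -- Fitting, ≥ direction
  have hfit_ge : Fitting (G ⧸ Z) ≤ (Fitting G).map mk := by
    rw [Fitting]
    refine iSup_le fun N' => iSup_le fun hN' => iSup_le fun hnil' => ?_
    set M := Subgroup.comap mk N' with hMdef
    have hmapM : M.map mk = N' :=
      Subgroup.map_comap_eq_self_of_surjective hmksurj N'
    have hcomm : ∀ L : Subgroup G, IsSubnormal L → IsQuasisimple L → ⁅M, L⁆ ≤ Z := by
      intro L hL1 hL2
      have hLN : ⁅L.map mk, N'⁆ = ⊥ :=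
        component_centralizes_nilpotent (himg L hL1 hL2).1 (himg L hL1 hL2).2 hN' hnil'
      refine hcommZ _ _ fun g hg l hl => ?_
      have hmem : ⁅(mk l : G ⧸ Z), mk g⁆ ∈ ⁅L.map mk, N'⁆ :=
        Subgroup.commutator_mem_commutator ⟨l, hl, rfl⟩ (Subgroup.mem_comap.mp hg)
      rw [hLN] at hmem
      have h1 : ⁅(mk l : G ⧸ Z), mk g⁆ = 1 := Subgroup.mem_bot.mp hmem
      rw [commutatorElement_eq_one_iff_commute] at h1
      rw [commutatorElement_eq_one_iff_commute]
      exact h1.symm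
    have hMC : M ≤ centralizer ((Layer G : Subgroup G) : Set G) :=
      le_centralizer_layer Z hZC hcomm
    have hMZ : M ≤ centralizer (Z : Set G) := hMC.trans (Subgroup.centralizer_le hZE)
    haveI : (Z.subgroupOf M).Normal := ‹Z.Normal›.subgroupOf M
    have hker : Z.subgroupOf M ≤ center ↥M := by
      rintro ⟨x, hxM⟩ hx
      rw [mem_subgroupOf] at hx
      rw [Subgroup.mem_center_iff]
      rintro ⟨g, hgM⟩
      apply Subtype.ext
      show g * x = x * g
      exact (Subgroup.mem_centralizer_iff.mp (hMZ hgM) x hx).symm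
    have hMnil : Group.IsNilpotent ↥M := by
      refine nilpotent_of_central_quot (Z.subgroupOf M) hker ?_
      have e : (↥M ⧸ Z.subgroupOf M) ≃* ↥N' :=
        (quotIsoMap Z M).trans (MulEquiv.subgroupCongr hmapM)
      exact (Group.isNilpotent_congr e).mpr hnil'
    have hMnormal : M.Normal := hN'.comap mk
    have hMfit : M ≤ Fitting G :=
      le_iSup_of_le M (le_iSup_of_le hMnormal (le_iSup_of_le hMnil le_rfl))
    rw [← hmapM]
    exact Subgroup.map_mono hMfit
  have hfit : (Fitting G).map mk = Fitting (G ⧸ Z) := le_antisymm hfit_le hfit_ge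
  -- centralizer
  have hcent : (Subgroup.centralizer ((Layer G : Subgroup G) : Set G)).map mk
      = Subgroup.centralizer ((Layer (G ⧸ Z) : Subgroup (G ⧸ Z)) : Set (G ⧸ Z)) := by
    apply le_antisymm
    · rintro - ⟨c, hc, rfl⟩
      rw [Subgroup.mem_centralizer_iff]
      intro y hy
      rw [← hlayer] at hy
      obtain ⟨e, he, rfl⟩ := hy
      have hcomm : e * c = c * e := Subgroup.mem_centralizer_iff.mp hc e he
      rw [← map_mul, ← map_mul, hcomm]
    · set M := Subgroup.comap mk
        (Subgroup.centralizer ((Layer (G ⧸ Z) : Subgroup (G ⧸ Z)) : Set (G ⧸ Z))) with hMdef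
      have hcomm : ∀ L : Subgroup G, IsSubnormal L → IsQuasisimple L → ⁅M, L⁆ ≤ Z := by
        intro L hL1 hL2
        refine hcommZ _ _ fun g hg l hl => ?_
        have hlmem : (mk l : G ⧸ Z) ∈ Layer (G ⧸ Z) := by
          apply component_le_layer (himg L hL1 hL2).1 (himg L hL1 hL2).2
          exact ⟨l, hl, rfl⟩
        have := Subgroup.mem_centralizer_iff.mp (Subgroup.mem_comap.mp hg) (mk l) hlmem
        rw [commutatorElement_eq_one_iff_commute]
        exact this.symm
      have hMC : M ≤ centralizer ((Layer G : Subgroup G) : Set G) :=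
        le_centralizer_layer Z hZC hcomm
      have : Subgroup.centralizer ((Layer (G ⧸ Z) : Subgroup (G ⧸ Z)) : Set (G ⧸ Z))
          = M.map mk := (Subgroup.map_comap_eq_self_of_surjective hmksurj _).symm
      rw [this]
      exact Subgroup.map_mono hMC
  refine ⟨hfit, hlayer, ?_, hcent⟩
  rw [GenFitting, GenFitting, Subgroup.map_sup, hfit, hlayer]
end

section
/- Let H be a finite group acting faithfully on a finite group V of order coprime arranged as a direct product of its Sylow subgroups P₁,...,P_l, such that for each i the image H/C_H(P_i) is a p_i-group (p_i the prime of P_i). Then H is nilpotent, and the semidirect product HV is nilpotent. -/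
open Subgroup Pointwise

section Aux

variable {V : Type*} [Group V] [Finite V]

/-- A subgroup containing (for every prime) some Sylow subgroup is the whole group. -/
lemma aux_eq_top_of_sylows_le (F : Subgroup V)
    (h : ∀ q : ℕ, q.Prime → ∃ Q : Sylow q V, (Q : Subgroup V) ≤ F) : F = ⊤ := by
  have hV : Nat.card V ≠ 0 := Nat.card_pos.ne'
  have hF : Nat.card F ≠ 0 := Nat.card_pos.ne'
  apply Subgroup.eq_top_of_card_eq
  refine Nat.dvd_antisymm (Subgroup.card_subgroup_dvd_card F) ?_
  rw [← Nat.factorization_le_iff_dvd hV hF]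
  intro p
  by_cases hp : p.Prime
  · haveI := Fact.mk hp
    obtain ⟨Q, hQ⟩ := h p hp
    have h1 : Nat.card Q = p ^ (Nat.card V).factorization p := Q.card_eq_multiplicity
    have h2 : Nat.card Q ∣ Nat.card F := by
      have := Subgroup.card_dvd_of_le hQ
      simpa using this
    rw [h1] at h2
    exact (Nat.Prime.pow_dvd_iff_le_factorization hp hF).mp h2
  · simp [Nat.factorization_eq_zero_of_not_prime _ hp]

/-- The fixed points of an automorphism form a subgroup. -/
def fixedSubgroup (u : MulAut V) : Subgroup V where
  carrier := {x | u x = x}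
  one_mem' := by simp
  mul_mem' := by intro a b ha hb; simp only [Set.mem_setOf_eq] at *; rw [map_mul, ha, hb]
  inv_mem' := by intro a ha; simp only [Set.mem_setOf_eq] at *; rw [map_inv, ha]

lemma fixed_pow {u : MulAut V} {x : V} (h : u x = x) (n : ℕ) : (u ^ n) x = x := by
  induction n with
  | zero => rfl
  | succ n ih => rw [pow_succ, MulAut.mul_apply, h, ih]

variable {H : Type*} [Group H]

/-- A `p`-element whose action on a Sylow `q`-subgroup (q ≠ p) has `q`-power order
acts trivially on it. -/
lemma aux_p_elem_fixes {φ : H →* MulAut V} {p q : ℕ} (hp : p.Prime) (hq : q.Prime)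
    (hne : p ≠ q) {g : H} {m : ℕ} (hg : g ^ p ^ m = 1) {Q : Sylow q V} {k : ℕ}
    (hk : ∀ x ∈ (Q : Subgroup V), φ (g ^ q ^ k) x = x) :
    ∀ x ∈ (Q : Subgroup V), φ g x = x := by
  intro x hx
  rcases Nat.lt_or_ge 1 (p ^ m) with h1 | h1
  · have hcop : Nat.Coprime (q ^ k) (p ^ m) :=
      Nat.Coprime.pow _ _ ((Nat.coprime_primes hq hp).mpr hne.symm)
    obtain ⟨b, -, hb⟩ := Nat.exists_mul_mod_eq_one_of_coprime hcop h1
    have hgb : g ^ (q ^ k * b) = g := by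
      conv_lhs => rw [← Nat.div_add_mod (q ^ k * b) (p ^ m)]
      rw [pow_add, pow_mul, hg, one_pow, one_mul, hb, pow_one]
    calc φ g x = φ (g ^ (q ^ k * b)) x := by rw [hgb]
      _ = ((φ (g ^ q ^ k)) ^ b) x := by rw [pow_mul, map_pow]
      _ = x := fixed_pow (hk x hx) b
  · have hpm : p ^ m = 1 := le_antisymm h1 (Nat.one_le_pow _ _ hp.pos)
    rw [hpm, pow_one] at hg
    rw [hg, map_one]
    rfl

end Aux

theorem isNilpotent_of_pGroup_action_on_sylows
    (H V : Type*) [Group H] [Finite H] [Group V] [Finite V] [Group.IsNilpotent V]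
    (φ : H →* MulAut V) (hφ : Function.Injective φ)
    (hpq : ∀ q : ℕ, q.Prime → ∀ Q : Sylow q V, ∀ g : H,
      ∃ k : ℕ, ∀ x ∈ (Q : Subgroup V), φ (g ^ q ^ k) x = x) :
    Group.IsNilpotent H ∧ Group.IsNilpotent (V ⋊[φ] H) := by
  classical
  -- Sylow subgroups of V are normal and characteristic
  have hVsylnormal : ∀ (q : ℕ) (_ : Fact q.Prime) (Q : Sylow q V), (Q : Subgroup V).Normal :=
    ((isNilpotent_of_finite_tfae (G := V)).out 0 3).mp (inferInstance : Group.IsNilpotent V)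
  have hchar : ∀ (q : ℕ) (_ : q.Prime) (Q : Sylow q V) (e : MulAut V),
      ∀ x ∈ (Q : Subgroup V), e x ∈ (Q : Subgroup V) := by
    intro q hq Q e x hx
    haveI := Fact.mk hq
    haveI := Sylow.characteristic_of_normal Q (hVsylnormal q ⟨hq⟩ Q)
    have hmap : (Q : Subgroup V).map e.toMonoidHom = Q :=
      Subgroup.characteristic_iff_map_eq.mp (inferInstance : (Q : Subgroup V).Characteristic) e
    rw [← hmap]
    exact ⟨x, hx, rfl⟩
  -- part 1 : H is nilpotent
  set I := (Nat.card V).primeFactors with hI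
  have hIprime : ∀ q : I, (q : ℕ).Prime := fun q => Nat.prime_of_mem_primeFactors q.2
  have Qsyl : ∀ q : I, Sylow (q : ℕ) V := fun q =>
    haveI := Fact.mk (hIprime q); default
  -- the "centralizer" of the chosen Sylow subgroup
  have hC : ∀ q : I, ∃ C : Subgroup H,
      (∀ g : H, g ∈ C ↔ ∀ x ∈ (Qsyl q : Subgroup V), φ g x = x) ∧ C.Normal := by
    intro q
    refine ⟨{ carrier := {g | ∀ x ∈ (Qsyl q : Subgroup V), φ g x = x}
              one_mem' := by intro x hx; simp
              mul_mem' := ?_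
              inv_mem' := ?_ }, fun g => Iff.rfl, ?_⟩
    · intro a b ha hb x hx
      rw [map_mul, MulAut.mul_apply, hb x hx, ha x hx]
    · intro a ha x hx
      have := ha x hx
      rw [map_inv]
      exact (MulEquiv.symm_apply_eq (φ a)).mpr (this.symm)
    · constructor
      intro g hg h x hx
      have hx' : (φ h⁻¹) x ∈ (Qsyl q : Subgroup V) := hchar _ (hIprime q) _ _ x hx
      have := hg _ hx'
      rw [map_mul, map_mul, MulAut.mul_apply, MulAut.mul_apply, this]
      simp
  choose C hCmem hCnormal using hC
  have hHnil : Group.IsNilpotent H := by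
    haveI : ∀ q : I, (C q).Normal := hCnormal
    -- each quotient is a q-group
    have hPG : ∀ q : I, IsPGroup (q : ℕ) (H ⧸ C q) := by
      intro q
      intro g
      induction g using QuotientGroup.induction_on with
      | _ g =>
        obtain ⟨k, hk⟩ := hpq q (hIprime q) (Qsyl q) g
        refine ⟨k, ?_⟩
        rw [← QuotientGroup.mk_pow, QuotientGroup.eq_one_iff]
        exact (hCmem q _).mpr hk
    haveI : ∀ q : I, Group.IsNilpotent (H ⧸ C q) := by
      intro q
      haveI := Fact.mk (hIprime q)
      exact (hPG q).isNilpotent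
    let f : H →* ∀ q : I, H ⧸ C q := Pi.monoidHom fun q => QuotientGroup.mk' (C q)
    have hfinj : Function.Injective f := by
      rw [← MonoidHom.ker_eq_bot_iff, eq_bot_iff]
      intro g hg
      simp only [MonoidHom.mem_ker] at hg
      have hfix : ∀ q : I, ∀ x ∈ (Qsyl q : Subgroup V), φ g x = x := by
        intro q
        have : (QuotientGroup.mk' (C q)) g = 1 := congrFun hg q
        rw [QuotientGroup.mk'_apply, QuotientGroup.eq_one_iff] at this
        exact (hCmem q g).mp this
      have htop : fixedSubgroup (φ g) = ⊤ := by
        apply aux_eq_top_of_sylows_le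
        intro p hp
        by_cases hpI : p ∈ I
        · exact ⟨Qsyl ⟨p, hpI⟩, fun x hx => hfix ⟨p, hpI⟩ x hx⟩
        · haveI := Fact.mk hp
          refine ⟨default, fun x hx => ?_⟩
          have h0 : (Nat.card V).factorization p = 0 := by
            rw [Nat.factorization_eq_zero_iff]
            right; left
            intro hdvd
            exact hpI (Nat.mem_primeFactors.mpr ⟨hp, hdvd, Nat.card_pos.ne'⟩)
          have hcard : Nat.card (default : Sylow p V) = 1 := by
            rw [Sylow.card_eq_multiplicity, h0, pow_zero]
          have : ((default : Sylow p V) : Subgroup V) = ⊥ :=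
            Subgroup.eq_bot_of_card_eq _ hcard
          rw [this] at hx
          have : x = 1 := hx
          simp [fixedSubgroup, this]
      have : φ g = 1 := by
        ext x
        have : x ∈ fixedSubgroup (φ g) := htop ▸ Subgroup.mem_top x
        exact this
      have : g = 1 := hφ (by rw [this, map_one])
      simp [this]
    have e := MonoidHom.ofInjective hfinj
    exact (Group.isNilpotent_congr e).mpr inferInstance
  refine ⟨hHnil, ?_⟩
  -- part 2 : the semidirect product is nilpotent
  set G := V ⋊[φ] H with hG
  have eG : G ≃ V × H :=
    ⟨fun x => (x.left, x.right), fun y => ⟨y.1, y.2⟩, fun x => rfl, fun y => rfl⟩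
  haveI : Finite G := Finite.of_equiv _ eG.symm
  have hHsylnormal : ∀ (q : ℕ) (_ : Fact q.Prime) (Q : Sylow q H), (Q : Subgroup H).Normal :=
    ((isNilpotent_of_finite_tfae (G := H)).out 0 3).mp hHnil
  apply ((isNilpotent_of_finite_tfae (G := G)).out 3 0).mp
  intro p hp P
  haveI := hp
  set Vp : Sylow p V := default with hVp
  set Hp : Sylow p H := default with hHp
  haveI hVpn : (Vp : Subgroup V).Normal := hVsylnormal p hp Vp
  haveI hHpn : (Hp : Subgroup H).Normal := hHsylnormal p hp Hp
  -- key: p-elements of H almost centralize V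
  have hfixkey : ∀ g : H, (∃ m : ℕ, g ^ p ^ m = 1) → ∀ v : V, v * (φ g v)⁻¹ ∈ (Vp : Subgroup V) := by
    intro g ⟨m, hm⟩ v
    set F := fixedSubgroup (φ g) with hF
    have hsup : (Vp : Subgroup V) ⊔ F = ⊤ := by
      apply aux_eq_top_of_sylows_le
      intro q hq
      rcases eq_or_ne q p with rfl | hne
      · exact ⟨Vp, le_sup_left⟩
      · haveI := Fact.mk hq
        refine ⟨default, le_trans ?_ le_sup_right⟩
        intro x hx
        obtain ⟨k, hk⟩ := hpq q hq default g
        exact aux_p_elem_fixes hp.out hq hne.symm hm hk x hx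
    have hv : v ∈ (((Vp : Subgroup V) : Set V) * ((F : Subgroup V) : Set V) : Set V) := by
      rw [← Subgroup.normal_mul, hsup]; trivial
    obtain ⟨a, ha, c, hc, rfl⟩ := hv
    have hfc : φ g c = c := hc
    have hfa : φ g a ∈ (Vp : Subgroup V) := hchar p hp.out Vp (φ g) a ha
    have : a * c * (φ g (a * c))⁻¹ = a * (φ g a)⁻¹ := by
      rw [map_mul, hfc]
      group
    rw [this]
    exact Subgroup.mul_mem _ ha (Subgroup.inv_mem _ hfa)
  -- the candidate Sylow subgroup of G
  have hKsub : ∃ K : Subgroup G, ∀ x : G,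
      (x ∈ K ↔ x.left ∈ (Vp : Subgroup V) ∧ x.right ∈ (Hp : Subgroup H)) := by
    refine ⟨{ carrier := {x : G | x.left ∈ (Vp : Subgroup V) ∧ x.right ∈ (Hp : Subgroup H)}
              one_mem' := ⟨by simpa using Subgroup.one_mem _, by simpa using Subgroup.one_mem _⟩
              mul_mem' := ?_
              inv_mem' := ?_ }, fun x => Iff.rfl⟩
    · rintro a b ⟨ha1, ha2⟩ ⟨hb1, hb2⟩
      refine ⟨?_, ?_⟩
      · show a.left * φ a.right b.left ∈ _
        exact Subgroup.mul_mem _ ha1 (hchar p hp.out Vp _ _ hb1)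
      · show a.right * b.right ∈ _
        exact Subgroup.mul_mem _ ha2 hb2
    · rintro a ⟨ha1, ha2⟩
      refine ⟨?_, ?_⟩
      · show φ a.right⁻¹ a.left⁻¹ ∈ _
        exact hchar p hp.out Vp _ _ (Subgroup.inv_mem _ ha1)
      · show a.right⁻¹ ∈ _
        exact Subgroup.inv_mem _ ha2
  obtain ⟨K, hK⟩ := hKsub
  -- K is normal
  haveI hKnormal : K.Normal := by
    constructor
    intro x hx g
    obtain ⟨hx1, hx2⟩ := (hK x).mp hx
    apply (hK _).mpr
    have hleft : (g * x * g⁻¹).left =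
        g.left * φ g.right x.left * φ (g.right * x.right * g.right⁻¹) g.left⁻¹ := by
      show g.left * φ g.right x.left * φ (g.right * x.right) (φ g.right⁻¹ g.left⁻¹) = _
      rw [← MulAut.mul_apply, ← map_mul]
    have hright : (g * x * g⁻¹).right = g.right * x.right * g.right⁻¹ := rfl
    constructor
    · rw [hleft]
      set g' := g.right * x.right * g.right⁻¹ with hg'
      have hg'mem : g' ∈ (Hp : Subgroup H) := hHpn.conj_mem _ hx2 _
      have hg'p : ∃ m : ℕ, g' ^ p ^ m = 1 := by
        obtain ⟨k, hk⟩ := Hp.2 (⟨g', hg'mem⟩ : (Hp : Subgroup H))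
        exact ⟨k, by simpa using congrArg Subtype.val hk⟩
      set v := g.left with hv
      set w := φ g.right x.left with hw
      set z := φ g' v⁻¹ with hz
      have hwmem : w ∈ (Vp : Subgroup V) := hchar p hp.out Vp _ _ hx1
      have hvz : v * z ∈ (Vp : Subgroup V) := by
        rw [hz, map_inv]
        exact hfixkey g' hg'p v
      have : v * w * z = (v * z) * (z⁻¹ * w * z⁻¹⁻¹) := by group
      rw [this]
      exact Subgroup.mul_mem _ hvz (hVpn.conj_mem _ hwmem _)
    · rw [hright]
      exact hHpn.conj_mem _ hx2 _
  -- cardinality of K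
  have eK : K ≃ ↥(Vp : Subgroup V) × ↥(Hp : Subgroup H) :=
    { toFun := fun x => (⟨x.1.left, ((hK x.1).mp x.2).1⟩, ⟨x.1.right, ((hK x.1).mp x.2).2⟩)
      invFun := fun y => ⟨⟨y.1.1, y.2.1⟩, (hK _).mpr ⟨y.1.2, y.2.2⟩⟩
      left_inv := fun x => rfl
      right_inv := fun y => rfl }
  have hcardV : Nat.card V ≠ 0 := Nat.card_pos.ne'
  have hcardH : Nat.card H ≠ 0 := Nat.card_pos.ne'
  have hcardG : Nat.card G = Nat.card V * Nat.card H :=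
    (Nat.card_congr eG).trans (Nat.card_prod _ _)
  have hcardK : Nat.card K = p ^ ((Nat.card G).factorization p) := by
    rw [Nat.card_congr eK, Nat.card_prod, Sylow.card_eq_multiplicity,
      Sylow.card_eq_multiplicity, ← pow_add, hcardG,
      Nat.factorization_mul hcardV hcardH, Finsupp.add_apply]
  -- K is a p-group
  have hKp : IsPGroup p K := IsPGroup.iff_card.mpr ⟨_, hcardK⟩
  -- K is contained in P
  obtain ⟨R, hKR⟩ := hKp.exists_le_sylow
  obtain ⟨g, hg⟩ := MulAction.exists_smul_eq G R P
  have hKP : K ≤ (P : Subgroup G) := by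
    have h1 : MulAut.conj g • K = K := Subgroup.Normal.conj_smul_eq_self g K
    have h2 : MulAut.conj g • (R : Subgroup G) = ((g • R : Sylow p G) : Subgroup G) := by
      rw [Sylow.coe_subgroup_smul]
    calc K = MulAut.conj g • K := h1.symm
      _ ≤ MulAut.conj g • (R : Subgroup G) := by
          rw [Subgroup.pointwise_smul_def, Subgroup.pointwise_smul_def]
          exact Subgroup.map_mono hKR
      _ = ((g • R : Sylow p G) : Subgroup G) := h2
      _ = (P : Subgroup G) := by rw [hg]
  have hfinal : K = (P : Subgroup G) := by
    apply Subgroup.eq_of_le_of_card_ge hKP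
    rw [hcardK, Sylow.card_eq_multiplicity]
  exact hfinal ▸ hKnormal
end
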